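/- arXiv:1509.00256 — 2 statements merged into one kernel-verified Lean document; each statement's English description precedes it below -/
import Mathlib

section
/- Let G be an infinite finitely generated group with finite symmetric generating set S and let X_n be a symmetric, finitely supported random walk on G whose step distribution has support generating G. Then there exists a constant C > 0 (depending on G, S and the step distribution) such that for all n ≥ 1: H(X_n) ≤ C·(E|X_n| + 1) and E|X_n| ≤ C·√(n·(H(X_n) + 1)) (the speed-entropy relation). -/
open scoped BigOperators Classical

/-- Convolution of two measures (given as weight functions) on a group. -/
noncomputable def conv {G : Type*} [Group G] (μ ν : G → ℝ) : G → ℝ :=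
  fun g => ∑' h, μ h * ν (h⁻¹ * g)

/-- The `n`-fold convolution power of `μ`; `convPow μ n` is the distribution of `X_n`. -/
noncomputable def convPow {G : Type*} [Group G] (μ : G → ℝ) : ℕ → G → ℝ
  | 0 => fun g => if g = 1 then 1 else 0
  | n + 1 => conv (convPow μ n) μ

/-- Shannon entropy of a measure on a countable group:
`H(μ) = -∑ μ(g) log μ(g)` (with `0 log 0 = 0`). -/
noncomputable def entropy {G : Type*} (μ : G → ℝ) : ℝ :=
  ∑' g, Real.negMulLog (μ g)

/-- Word length with respect to a generating set `S`. -/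
noncomputable def wordLength {G : Type*} [Group G] (S : Set G) (g : G) : ℕ :=
  sInf {n | ∃ l : List G, l.length = n ∧ (∀ x ∈ l, x ∈ S) ∧ l.prod = g}

/-- Rate of escape: `E|X_n| = ∑ μ^{*n}(g) |g|`. -/
noncomputable def speed {G : Type*} [Group G] (S : Set G) (μ : G → ℝ) (n : ℕ) : ℝ :=
  ∑' g, convPow μ n g * (wordLength S g : ℝ)

/-- `μ` is a symmetric, finitely supported probability measure whose support generates `G`. -/
structure IsStepDist {G : Type*} [Group G] (μ : G → ℝ) : Prop where
  nonneg : ∀ g, 0 ≤ μ g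
  total : ∑' g, μ g = 1
  symm : ∀ g, μ g⁻¹ = μ g
  finSupp : (Function.support μ).Finite
  gen : Subgroup.closure (Function.support μ) = ⊤

/-- `S` is a finite symmetric generating set of `G`. -/
structure IsGenSet {G : Type*} [Group G] (S : Set G) : Prop where
  finite : S.Finite
  symm : ∀ s ∈ S, s⁻¹ ∈ S
  gen : Subgroup.closure S = ⊤


namespace SER

variable {G : Type*} [Group G] {S : Set G}

lemma exists_rep (hS : IsGenSet S) (g : G) :
    ∃ l : List G, (∀ x ∈ l, x ∈ S) ∧ l.prod = g := by
  have hg : g ∈ Subgroup.closure S := by rw [hS.gen]; trivial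
  induction hg using Subgroup.closure_induction with
  | mem x hx => exact ⟨[x], by simpa using hx, by simp⟩
  | one => exact ⟨[], by simp, by simp⟩
  | mul x y _ _ hx hy =>
      obtain ⟨l1, h1, h1'⟩ := hx; obtain ⟨l2, h2, h2'⟩ := hy
      refine ⟨l1 ++ l2, ?_, by simp [h1', h2']⟩
      intro x hx
      rcases List.mem_append.1 hx with h | h
      exacts [h1 x h, h2 x h]
  | inv x _ hx =>
      obtain ⟨l, h1, h1'⟩ := hx
      refine ⟨(l.map Inv.inv).reverse, ?_, ?_⟩
      · intro y hy
        simp only [List.mem_reverse, List.mem_map] at hy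
        obtain ⟨z, hz, rfl⟩ := hy
        exact hS.symm z (h1 z hz)
      · rw [List.prod_reverse_noncomm]
        simp [h1']

lemma wl_nonempty (hS : IsGenSet S) (g : G) :
    {n | ∃ l : List G, l.length = n ∧ (∀ x ∈ l, x ∈ S) ∧ l.prod = g}.Nonempty := by
  obtain ⟨l, h1, h2⟩ := exists_rep hS g
  exact ⟨l.length, l, rfl, h1, h2⟩

lemma wl_spec (hS : IsGenSet S) (g : G) :
    ∃ l : List G, l.length = wordLength S g ∧ (∀ x ∈ l, x ∈ S) ∧ l.prod = g :=
  Nat.sInf_mem (wl_nonempty hS g)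

lemma wl_le {g : G} (l : List G) (hl : ∀ x ∈ l, x ∈ S) (hp : l.prod = g) :
    wordLength S g ≤ l.length :=
  Nat.sInf_le ⟨l, rfl, hl, hp⟩

lemma wl_one : wordLength S (1 : G) = 0 :=
  Nat.le_zero.1 (wl_le [] (by simp) (by simp))

lemma wl_mul (hS : IsGenSet S) (g h : G) :
    wordLength S (g * h) ≤ wordLength S g + wordLength S h := by
  obtain ⟨l1, hl1, hm1, hp1⟩ := wl_spec hS g
  obtain ⟨l2, hl2, hm2, hp2⟩ := wl_spec hS h
  have hmem : ∀ x ∈ l1 ++ l2, x ∈ S := by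
    intro x hx
    rcases List.mem_append.1 hx with h | h
    exacts [hm1 x h, hm2 x h]
  have hprod : (l1 ++ l2).prod = g * h := by simp [hp1, hp2]
  have := wl_le (S := S) (l1 ++ l2) hmem hprod
  simpa [hl1, hl2] using this

lemma wl_eq_zero (hS : IsGenSet S) {g : G} (h : wordLength S g = 0) : g = 1 := by
  obtain ⟨l, hl, _, hp⟩ := wl_spec hS g
  rw [h, List.length_eq_zero_iff] at hl
  simp [hl] at hp; exact hp.symm

/-- triangle-type lower bound -/
lemma wl_triangle (hS : IsGenSet S) (g h : G) :
    wordLength S h ≤ wordLength S g + wordLength S (g⁻¹ * h) := by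
  simpa using wl_mul hS g (g⁻¹ * h)


lemma ofFn_get_cast {α : Type*} {m : ℕ} (l : List α) (h : l.length = m) :
    List.ofFn (fun i : Fin m => l.get (Fin.cast h.symm i)) = l := by
  subst h; exact List.ofFn_get l

/-- the ball is contained in the image of padded words -/
lemma ball_subset_image (hS : IsGenSet S) (m : ℕ) :
    {g : G | wordLength S g ≤ m} ⊆
      Set.range (fun v : Fin m → ↥(insert (1:G) hS.finite.toFinset) =>
        (List.ofFn (fun i => ((v i : G)))).prod) := by
  classical
  set T : Finset G := insert (1:G) hS.finite.toFinset with hT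
  intro g hg
  obtain ⟨l, hl, hmem, hprod⟩ := wl_spec hS g
  set lp : List G := l ++ List.replicate (m - l.length) 1 with hlp
  have hlen : lp.length = m := by
    have hgm : wordLength S g ≤ m := hg
    simp only [hlp, List.length_append, List.length_replicate]
    omega
  have hmemT : ∀ x ∈ lp, x ∈ T := by
    intro x hx
    rcases List.mem_append.1 hx with h | h
    · exact Finset.mem_insert.2 (Or.inr (hS.finite.mem_toFinset.2 (hmem x h)))
    · rw [List.eq_of_mem_replicate h]; exact Finset.mem_insert_self _ _
  refine ⟨fun i => ⟨lp.get (Fin.cast hlen.symm i), hmemT _ (List.get_mem _ _)⟩, ?_⟩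
  show (List.ofFn (fun i : Fin m => lp.get (Fin.cast hlen.symm i))).prod = g
  rw [ofFn_get_cast lp hlen]
  simp [hlp, hprod]

lemma ball_finite (hS : IsGenSet S) (m : ℕ) : {g : G | wordLength S g ≤ m}.Finite := by
  have : Finite ↥(insert (1:G) hS.finite.toFinset) := inferInstance
  exact Set.Finite.subset (Set.finite_range _) (ball_subset_image hS m)

noncomputable def ballF (hS : IsGenSet S) (m : ℕ) : Finset G := (ball_finite hS m).toFinset

lemma mem_ballF {hS : IsGenSet S} {m : ℕ} {g : G} :
    g ∈ ballF hS m ↔ wordLength S g ≤ m := by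
  simp [ballF, Set.Finite.mem_toFinset]

lemma card_ballF (hS : IsGenSet S) (m : ℕ) :
    (ballF hS m).card ≤ (hS.finite.toFinset.card + 1) ^ m := by
  classical
  set T : Finset G := insert (1:G) hS.finite.toFinset with hT
  have h1 : (ballF hS m : Set G) ⊆ Set.range (fun v : Fin m → ↥T =>
      (List.ofFn (fun i => ((v i : G)))).prod) := by
    intro g hg
    exact ball_subset_image hS m (by simpa [ballF, Set.Finite.mem_toFinset] using hg)
  have h2 : ballF hS m ⊆ Finset.image
      (fun v : Fin m → ↥T => (List.ofFn (fun i => ((v i : G)))).prod) Finset.univ := by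
    intro g hg
    obtain ⟨v, hv⟩ := h1 hg
    exact Finset.mem_image.2 ⟨v, Finset.mem_univ _, hv⟩
  calc (ballF hS m).card ≤ _ := Finset.card_le_card h2
    _ ≤ (Finset.univ : Finset (Fin m → ↥T)).card := Finset.card_image_le
    _ = (T.card) ^ m := by simp [Finset.card_univ]
    _ ≤ (hS.finite.toFinset.card + 1) ^ m := by
        apply Nat.pow_le_pow_left
        simpa [hT] using Finset.card_insert_le (1:G) hS.finite.toFinset


section Stage3
variable {G : Type*} [Group G] {S : Set G} {μ : G → ℝ}

/-- The finite support of `μ` as a `Finset`. -/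
noncomputable def Dmu (hμ : IsStepDist μ) : Finset G := hμ.finSupp.toFinset

lemma mem_Dmu {hμ : IsStepDist μ} {s : G} : s ∈ Dmu hμ ↔ μ s ≠ 0 := by
  simp [Dmu, Set.Finite.mem_toFinset, Function.support]

/-- max word length of a generator of the walk -/
noncomputable def Kc (hS : IsGenSet S) (hμ : IsStepDist μ) : ℕ :=
  (Dmu hμ).sup (wordLength S)

lemma wl_le_Kc (hS : IsGenSet S) (hμ : IsStepDist μ) {s : G} (hs : μ s ≠ 0) :
    wordLength S s ≤ Kc hS hμ :=
  Finset.le_sup (mem_Dmu.2 hs)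

lemma Kc_pos [Nontrivial G] (hS : IsGenSet S) (hμ : IsStepDist μ) : 1 ≤ Kc hS hμ := by
  by_contra h
  push_neg at h
  interval_cases hK : Kc hS hμ
  · -- all supports have word length 0, so support μ ⊆ {1}
    have hsub : Function.support μ ⊆ {(1:G)} := by
      intro s hs
      have h0 : wordLength S s ≤ 0 := hK ▸ wl_le_Kc hS hμ hs
      exact wl_eq_zero hS (Nat.le_zero.1 h0)
    have : Subgroup.closure (Function.support μ) ≤ Subgroup.closure {(1:G)} :=
      Subgroup.closure_mono hsub
    rw [hμ.gen, Subgroup.closure_singleton_one] at this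
    obtain ⟨x, hx⟩ := exists_ne (1:G)
    exact hx (by simpa using this (Subgroup.mem_top x))

lemma sum_mu (hμ : IsStepDist μ) : ∑ s ∈ Dmu hμ, μ s = 1 := by
  rw [← hμ.total]
  exact (tsum_eq_sum (fun s hs => by
    by_contra h0
    exact hs (mem_Dmu.2 h0))).symm

lemma tsum_mu_shift (hμ : IsStepDist μ) (h : G) : ∑' g, μ (h⁻¹ * g) = 1 := by
  rw [← hμ.total]
  exact ((Equiv.mulLeft h).tsum_eq (fun g => μ (h⁻¹ * g))).symm.trans
    (by simp [Equiv.mulLeft])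

lemma cp_nonneg (hμ : IsStepDist μ) : ∀ n g, 0 ≤ convPow μ n g := by
  intro n
  induction n with
  | zero => intro g; by_cases h : g = 1 <;> simp [convPow, h]
  | succ n ih =>
      intro g
      refine tsum_nonneg fun h => mul_nonneg (ih h) (hμ.nonneg _)

lemma cp_supp (hS : IsGenSet S) (hμ : IsStepDist μ) :
    ∀ n g, convPow μ n g ≠ 0 → wordLength S g ≤ n * Kc hS hμ := by
  intro n
  induction n with
  | zero =>
      intro g hg
      by_cases h : g = 1
      · simp [h, wl_one]
      · simp [convPow, h] at hg
  | succ n ih =>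
      intro g hg
      have : ∃ h : G, convPow μ n h * μ (h⁻¹ * g) ≠ 0 := by
        by_contra hall
        push_neg at hall
        exact hg (by simp [convPow, conv, hall, tsum_zero])
      obtain ⟨h, hh⟩ := this
      have h1 : convPow μ n h ≠ 0 := fun h0 => hh (by simp [h0])
      have h2 : μ (h⁻¹ * g) ≠ 0 := fun h0 => hh (by simp [h0])
      calc wordLength S g ≤ wordLength S h + wordLength S (h⁻¹ * g) := wl_triangle hS h g
        _ ≤ n * Kc hS hμ + Kc hS hμ := Nat.add_le_add (ih h h1) (wl_le_Kc hS hμ h2)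
        _ = (n + 1) * Kc hS hμ := by ring

lemma cp_zero_of (hS : IsGenSet S) (hμ : IsStepDist μ) {n : ℕ} {g : G}
    (h : ¬ wordLength S g ≤ n * Kc hS hμ) : convPow μ n g = 0 := by
  by_contra h0; exact h (cp_supp hS hμ n g h0)

lemma cp_succ_sum (hS : IsGenSet S) (hμ : IsStepDist μ) (n : ℕ) (g : G) :
    convPow μ (n+1) g = ∑ h ∈ ballF hS (n * Kc hS hμ), convPow μ n h * μ (h⁻¹ * g) := by
  show conv (convPow μ n) μ g = _
  exact tsum_eq_sum (fun h hh => by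
    rw [cp_zero_of hS hμ (fun hc => hh (mem_ballF.2 hc)), zero_mul])

lemma cp_sum_one (hS : IsGenSet S) (hμ : IsStepDist μ) :
    ∀ n, ∑ g ∈ ballF hS (n * Kc hS hμ), convPow μ n g = 1 := by
  intro n
  induction n with
  | zero =>
      have h1 : (1:G) ∈ ballF hS (0 * Kc hS hμ) := mem_ballF.2 (by simp [wl_one])
      rw [show (convPow μ 0) = fun g => if g = 1 then (1:ℝ) else 0 from rfl]
      rw [Finset.sum_ite_eq' (ballF hS (0 * Kc hS hμ)) (1:G) (fun _ => (1:ℝ))]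
      simpa using h1
  | succ n ih =>
      have key : ∀ h ∈ ballF hS (n * Kc hS hμ),
          ∑ g ∈ ballF hS ((n+1) * Kc hS hμ), μ (h⁻¹ * g) = 1 := by
        intro h hh
        rw [← tsum_mu_shift hμ h]
        refine (tsum_eq_sum (fun g hg => ?_)).symm
        by_contra h0
        apply hg
        refine mem_ballF.2 ?_
        calc wordLength S g ≤ wordLength S h + wordLength S (h⁻¹ * g) := wl_triangle hS h g
          _ ≤ n * Kc hS hμ + Kc hS hμ := Nat.add_le_add (mem_ballF.1 hh) (wl_le_Kc hS hμ h0)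
          _ = (n + 1) * Kc hS hμ := by ring
      calc ∑ g ∈ ballF hS ((n+1) * Kc hS hμ), convPow μ (n+1) g
          = ∑ g ∈ ballF hS ((n+1) * Kc hS hμ), ∑ h ∈ ballF hS (n * Kc hS hμ),
              convPow μ n h * μ (h⁻¹ * g) := by
            exact Finset.sum_congr rfl fun g _ => cp_succ_sum hS hμ n g
        _ = ∑ h ∈ ballF hS (n * Kc hS hμ), convPow μ n h *
              (∑ g ∈ ballF hS ((n+1) * Kc hS hμ), μ (h⁻¹ * g)) := by
            rw [Finset.sum_comm]
            exact Finset.sum_congr rfl fun h _ => by rw [Finset.mul_sum]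
        _ = ∑ h ∈ ballF hS (n * Kc hS hμ), convPow μ n h := by
            exact Finset.sum_congr rfl fun h hh => by rw [key h hh, mul_one]
        _ = 1 := ih

lemma cp_le_one (hS : IsGenSet S) (hμ : IsStepDist μ) (n : ℕ) (g : G) :
    convPow μ n g ≤ 1 := by
  by_cases hg : g ∈ ballF hS (n * Kc hS hμ)
  · rw [← cp_sum_one hS hμ n]
    exact Finset.single_le_sum (fun h _ => cp_nonneg hμ n h) hg
  · rw [cp_zero_of hS hμ (fun hc => hg (mem_ballF.2 hc))]; exact zero_le_one

lemma entropy_eq (hS : IsGenSet S) (hμ : IsStepDist μ) (n : ℕ) :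
    entropy (convPow μ n) = ∑ g ∈ ballF hS (n * Kc hS hμ), Real.negMulLog (convPow μ n g) :=
  tsum_eq_sum (fun g hg => by
    rw [cp_zero_of hS hμ (fun hc => hg (mem_ballF.2 hc)), Real.negMulLog_zero])

lemma speed_eq (hS : IsGenSet S) (hμ : IsStepDist μ) (n : ℕ) :
    speed S μ n = ∑ g ∈ ballF hS (n * Kc hS hμ), convPow μ n g * (wordLength S g : ℝ) :=
  tsum_eq_sum (fun g hg => by
    rw [cp_zero_of hS hμ (fun hc => hg (mem_ballF.2 hc)), zero_mul])

lemma speed_nonneg (hS : IsGenSet S) (hμ : IsStepDist μ) (n : ℕ) : 0 ≤ speed S μ n := by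
  rw [speed_eq hS hμ n]
  exact Finset.sum_nonneg fun g _ => mul_nonneg (cp_nonneg hμ n g) (Nat.cast_nonneg _)

lemma entropy_nonneg (hS : IsGenSet S) (hμ : IsStepDist μ) (n : ℕ) :
    0 ≤ entropy (convPow μ n) := by
  rw [entropy_eq hS hμ n]
  exact Finset.sum_nonneg fun g _ =>
    Real.negMulLog_nonneg (cp_nonneg hμ n g) (cp_le_one hS hμ n g)

end Stage3

section Stage4
variable {G : Type*} [Group G] {S : Set G} {μ : G → ℝ}

/-- base of the comparison measure -/
noncomputable def abase (hS : IsGenSet S) : ℝ := 2 * (hS.finite.toFinset.card + 1)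

lemma abase_pos (hS : IsGenSet S) : (0:ℝ) < abase hS := by
  have : (0:ℝ) < (hS.finite.toFinset.card + 1 : ℝ) := by positivity
  simp only [abase]; positivity

lemma two_le_abase (hS : IsGenSet S) : (2:ℝ) ≤ abase hS := by
  have : (1:ℝ) ≤ (hS.finite.toFinset.card + 1 : ℝ) := by
    have : (0:ℝ) ≤ (hS.finite.toFinset.card : ℝ) := Nat.cast_nonneg _
    linarith
  simp only [abase]; nlinarith

lemma sum_q_le_one (hS : IsGenSet S) (M : ℕ) :
    ∑ g ∈ ballF hS M, (1/2 : ℝ) * (1 / abase hS) ^ (wordLength S g) ≤ 1 := by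
  classical
  set a := abase hS with ha
  have ha2 : (2:ℝ) ≤ a := two_le_abase hS
  have hapos : (0:ℝ) < a := abase_pos hS
  set f : ℕ → ℝ := fun m => (1/2 : ℝ) * (1/a) ^ m with hf
  have hfnn : ∀ m, 0 ≤ f m := fun m => by positivity
  rw [Finset.sum_comp (f : ℕ → ℝ) (fun g => wordLength S g)]
  have himg : (ballF hS M).image (fun g => wordLength S g) ⊆ Finset.range (M+1) := by
    intro m hm
    obtain ⟨g, hg, rfl⟩ := Finset.mem_image.1 hm
    exact Finset.mem_range.2 (Nat.lt_succ_of_le (mem_ballF.1 hg))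
  calc ∑ m ∈ (ballF hS M).image (fun g => wordLength S g),
        ((ballF hS M).filter (fun g => wordLength S g = m)).card • f m
      ≤ ∑ m ∈ Finset.range (M+1),
        ((ballF hS M).filter (fun g => wordLength S g = m)).card • f m := by
        refine Finset.sum_le_sum_of_subset_of_nonneg himg fun m _ _ => ?_
        exact nsmul_nonneg (hfnn m) _
    _ ≤ ∑ m ∈ Finset.range (M+1), ((hS.finite.toFinset.card + 1 : ℝ)) ^ m * f m := by
        refine Finset.sum_le_sum fun m _ => ?_
        rw [nsmul_eq_mul]
        refine mul_le_mul_of_nonneg_right ?_ (hfnn m)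
        have h1 : ((ballF hS M).filter (fun g => wordLength S g = m)).card
            ≤ (ballF hS m).card := by
          refine Finset.card_le_card fun g hg => ?_
          obtain ⟨_, h2⟩ := Finset.mem_filter.1 hg
          exact mem_ballF.2 (le_of_eq h2)
        have h2 := (card_ballF hS m)
        have : (((ballF hS M).filter (fun g => wordLength S g = m)).card : ℝ)
            ≤ ((hS.finite.toFinset.card + 1) ^ m : ℕ) := by
          exact_mod_cast le_trans h1 h2
        simpa [Nat.cast_pow] using this
    _ = ∑ m ∈ Finset.range (M+1), (1/2 : ℝ) * (((hS.finite.toFinset.card + 1 : ℝ)) / a) ^ m := by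
        refine Finset.sum_congr rfl fun m _ => ?_
        rw [hf]
        simp only [one_div, div_eq_mul_inv, mul_pow, inv_pow, one_pow]
        ring
    _ ≤ ∑ m ∈ Finset.range (M+1), (1/2 : ℝ) * (1/2 : ℝ) ^ m := by
        refine Finset.sum_le_sum fun m _ => ?_
        refine mul_le_mul_of_nonneg_left ?_ (by norm_num)
        refine pow_le_pow_left₀ (by positivity) ?_ m
        rw [div_le_div_iff₀ hapos (by norm_num : (0:ℝ) < 2)]
        rw [ha]
        simp [abase]
        nlinarith [Nat.cast_nonneg (α := ℝ) hS.finite.toFinset.card]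
    _ ≤ 1 := by
        rw [← Finset.mul_sum]
        have h := geom_sum_eq (by norm_num : (1/2:ℝ) ≠ 1) (M+1)
        rw [h]
        have : (0:ℝ) ≤ (1/2)^(M+1) := by positivity
        norm_num
        nlinarith

lemma first_inequality (hS : IsGenSet S) (hμ : IsStepDist μ) (n : ℕ) :
    entropy (convPow μ n) ≤ Real.log (abase hS) * (speed S μ n + 1) := by
  classical
  set a := abase hS with ha
  have ha2 : (2:ℝ) ≤ a := two_le_abase hS
  have hapos : (0:ℝ) < a := abase_pos hS
  set B := ballF hS (n * Kc hS hμ) with hB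
  set p : G → ℝ := convPow μ n with hp
  set q : G → ℝ := fun g => (1/2 : ℝ) * (1/a) ^ (wordLength S g) with hq
  have hqpos : ∀ g, 0 < q g := fun g => by rw [hq]; positivity
  -- termwise Gibbs bound
  have key : ∀ g ∈ B, Real.negMulLog (p g) + p g * Real.log (q g) ≤ q g - p g := by
    intro g _
    rcases eq_or_lt_of_le (cp_nonneg hμ n g) with h0 | hpos
    · rw [hp, ← h0]
      simp [Real.negMulLog_zero]
      exact le_of_lt (hqpos g)
    · have hlog : Real.log (q g) - Real.log (p g) = Real.log (q g / p g) := by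
        rw [Real.log_div (ne_of_gt (hqpos g)) (ne_of_gt hpos)]
      have hle : Real.log (q g / p g) ≤ q g / p g - 1 :=
        Real.log_le_sub_one_of_pos (by positivity)
      have : p g * (Real.log (q g) - Real.log (p g)) ≤ p g * (q g / p g - 1) := by
        rw [hlog]
        exact mul_le_mul_of_nonneg_left hle (le_of_lt hpos)
      have h2 : p g * (q g / p g - 1) = q g - p g := by
        have hne : p g ≠ 0 := ne_of_gt hpos
        rw [mul_sub, mul_div_assoc', mul_div_cancel_left₀ _ hne, mul_one]
      rw [Real.negMulLog]
      nlinarith [this, h2]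
  have hsum : ∑ g ∈ B, (Real.negMulLog (p g) + p g * Real.log (q g)) ≤
      ∑ g ∈ B, (q g - p g) := Finset.sum_le_sum key
  rw [Finset.sum_add_distrib, Finset.sum_sub_distrib] at hsum
  have hsq : ∑ g ∈ B, q g ≤ 1 := sum_q_le_one hS (n * Kc hS hμ)
  have hsp : ∑ g ∈ B, p g = 1 := cp_sum_one hS hμ n
  have hent : entropy (convPow μ n) = ∑ g ∈ B, Real.negMulLog (p g) := entropy_eq hS hμ n
  -- compute ∑ p log q
  have hlogq : ∀ g, Real.log (q g) = -Real.log 2 - (wordLength S g : ℝ) * Real.log a := by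
    intro g
    rw [hq]
    simp only
    rw [Real.log_mul (by norm_num) (by positivity), Real.log_pow]
    rw [one_div a, Real.log_inv, one_div, Real.log_inv]
    push_cast
    ring
  have hplogq : ∑ g ∈ B, p g * Real.log (q g) =
      -Real.log 2 * (∑ g ∈ B, p g) - Real.log a * ∑ g ∈ B, p g * (wordLength S g : ℝ) := by
    rw [Finset.mul_sum, Finset.mul_sum, ← Finset.sum_sub_distrib]
    refine Finset.sum_congr rfl fun g _ => ?_
    rw [hlogq g]
    ring
  have hspeed : speed S μ n = ∑ g ∈ B, p g * (wordLength S g : ℝ) := speed_eq hS hμ n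
  have hlog2 : Real.log 2 ≤ Real.log a := Real.log_le_log (by norm_num) ha2
  have hloga : 0 < Real.log a := lt_of_lt_of_le (Real.log_pos (by norm_num)) hlog2
  have hspeednn : 0 ≤ speed S μ n := speed_nonneg hS hμ n
  -- conclude
  rw [hent]
  have : ∑ g ∈ B, Real.negMulLog (p g) ≤ Real.log 2 + Real.log a * speed S μ n := by
    have h5 := hsum
    rw [hplogq, hsp, ← hspeed] at h5
    nlinarith [hsq]
  calc ∑ g ∈ B, Real.negMulLog (p g) ≤ Real.log 2 + Real.log a * speed S μ n := this
    _ ≤ Real.log a + Real.log a * speed S μ n := by linarith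
    _ = Real.log a * (speed S μ n + 1) := by ring

end Stage4



lemma cos_pow_expand (θ : ℝ) (n : ℕ) :
    (Real.cos θ)^n = ∑ j ∈ Finset.range (n+1),
      ((n.choose j : ℝ)/2^n) * Real.cos (((n:ℝ) - 2*j) * θ) := by
  have key : ((Real.cos θ : ℝ) : ℂ)^n * 2^n = ∑ j ∈ Finset.range (n+1),
      (n.choose j : ℂ) * Complex.cos ((((n:ℝ) - 2*j) * θ : ℝ) : ℂ) := by
    have hcos : ((Real.cos θ : ℝ) : ℂ) = Complex.cos (θ : ℂ) := Complex.ofReal_cos θ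
    have hc : Complex.cos (θ:ℂ) * 2 =
        Complex.exp ((θ:ℂ) * Complex.I) + Complex.exp (-(θ:ℂ) * Complex.I) := by
      rw [Complex.cos]; ring
    have expand : (Complex.exp (-(θ:ℂ) * Complex.I) + Complex.exp ((θ:ℂ) * Complex.I))^n
        = ∑ j ∈ Finset.range (n+1),
            (n.choose j : ℂ) * Complex.exp ((((n:ℝ) - 2*j) * θ : ℝ) * Complex.I) := by
      rw [add_pow]
      refine Finset.sum_congr rfl fun j hj => ?_
      have hjn : j ≤ n := Nat.lt_succ_iff.1 (Finset.mem_range.1 hj)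
      rw [← Complex.exp_nat_mul, ← Complex.exp_nat_mul, ← Complex.exp_add]
      rw [mul_comm]
      congr 1
      have : ((n - j : ℕ) : ℂ) = (n : ℂ) - j := by
        push_cast [Nat.cast_sub hjn]; ring
      push_cast [this]
      ring
    have reflect : ∑ j ∈ Finset.range (n+1),
          (n.choose j : ℂ) * Complex.exp ((((n:ℝ) - 2*j) * θ : ℝ) * Complex.I)
        = ∑ j ∈ Finset.range (n+1),
          (n.choose j : ℂ) * Complex.exp (-((((n:ℝ) - 2*j) * θ : ℝ) * Complex.I)) := by
      rw [← Finset.sum_range_reflect]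
      refine Finset.sum_congr rfl fun j hj => ?_
      have hjn : j ≤ n := Nat.lt_succ_iff.1 (Finset.mem_range.1 hj)
      have h1 : n + 1 - 1 - j = n - j := by omega
      rw [h1, Nat.choose_symm hjn]
      congr 1
      have h2 : ((n - j : ℕ) : ℝ) = (n : ℝ) - j := by push_cast [Nat.cast_sub hjn]; ring
      push_cast [h2]
      ring_nf
    calc ((Real.cos θ : ℝ) : ℂ)^n * 2^n = (Complex.cos (θ:ℂ) * 2)^n := by
          rw [hcos]; ring
      _ = (Complex.exp (-(θ:ℂ) * Complex.I) + Complex.exp ((θ:ℂ) * Complex.I))^n := by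
          rw [hc]; ring_nf
      _ = ∑ j ∈ Finset.range (n+1),
            (n.choose j : ℂ) * Complex.exp ((((n:ℝ) - 2*j) * θ : ℝ) * Complex.I) := expand
      _ = ∑ j ∈ Finset.range (n+1), (n.choose j : ℂ) *
            ((Complex.exp ((((n:ℝ) - 2*j) * θ : ℝ) * Complex.I) +
              Complex.exp (-((((n:ℝ) - 2*j) * θ : ℝ) * Complex.I))) / 2) := by
          nth_rewrite 1 [show (∑ j ∈ Finset.range (n+1),
            (n.choose j : ℂ) * Complex.exp ((((n:ℝ) - 2*j) * θ : ℝ) * Complex.I)) =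
            (∑ j ∈ Finset.range (n+1),
            (n.choose j : ℂ) * Complex.exp ((((n:ℝ) - 2*j) * θ : ℝ) * Complex.I) +
            ∑ j ∈ Finset.range (n+1),
            (n.choose j : ℂ) * Complex.exp (-((((n:ℝ) - 2*j) * θ : ℝ) * Complex.I))) / 2 by
              rw [← reflect]; ring]
          rw [← Finset.sum_add_distrib, Finset.sum_div]
          refine Finset.sum_congr rfl fun j _ => ?_
          ring
      _ = ∑ j ∈ Finset.range (n+1),
            (n.choose j : ℂ) * Complex.cos ((((n:ℝ) - 2*j) * θ : ℝ) : ℂ) := by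
          refine Finset.sum_congr rfl fun j _ => ?_
          congr 1
          rw [Complex.cos]
          ring_nf
  have h2n : ((2:ℂ)^n) ≠ 0 := pow_ne_zero n two_ne_zero
  have key2 : Complex.cos (θ:ℂ)^n = ∑ j ∈ Finset.range (n+1),
      (n.choose j : ℂ)/2^n * Complex.cos ((((n:ℝ) - 2*j) * θ : ℝ) : ℂ) := by
    have hs : ∑ j ∈ Finset.range (n+1),
        (n.choose j : ℂ)/2^n * Complex.cos ((((n:ℝ) - 2*j) * θ : ℝ) : ℂ)
        = (∑ j ∈ Finset.range (n+1),
            (n.choose j : ℂ) * Complex.cos ((((n:ℝ) - 2*j) * θ : ℝ) : ℂ)) / 2^n := by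
      rw [Finset.sum_div]
      exact Finset.sum_congr rfl fun j _ => by ring
    rw [hs, ← key, Complex.ofReal_cos, mul_div_cancel_right₀ _ h2n]
  have : (((Real.cos θ)^n : ℝ) : ℂ) = ((∑ j ∈ Finset.range (n+1),
      ((n.choose j : ℝ)/2^n) * Real.cos (((n:ℝ) - 2*j) * θ) : ℝ) : ℂ) := by
    push_cast [Complex.ofReal_cos]
    convert key2 using 2 with j hj
    push_cast
    ring_nf
  exact_mod_cast this

lemma tail_one_sided (n : ℕ) (hn : 1 ≤ n) {a : ℝ} (ha : 0 ≤ a) :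
    ∑ j ∈ (Finset.range (n+1)).filter (fun j : ℕ => a ≤ (n:ℝ) - 2*(j:ℝ)), (n.choose j : ℝ)/2^n
      ≤ Real.exp (-a^2/(2*n)) := by
  have hnpos : (0:ℝ) < n := by exact_mod_cast hn
  set t : ℝ := a / n with ht
  have htnn : 0 ≤ t := div_nonneg ha (le_of_lt hnpos)
  have step1 : ∑ j ∈ (Finset.range (n+1)).filter (fun j : ℕ => a ≤ (n:ℝ) - 2*(j:ℝ)),
      (n.choose j : ℝ)/2^n ≤ Real.exp (-(t*a)) *
        ∑ j ∈ Finset.range (n+1), (n.choose j : ℝ)/2^n * Real.exp (t * ((n:ℝ) - 2*j)) := by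
    rw [Finset.mul_sum]
    refine le_trans (Finset.sum_le_sum ?_) (Finset.sum_le_sum_of_subset_of_nonneg
      (Finset.filter_subset _ _) (fun j _ _ => by positivity))
    intro j hj
    obtain ⟨_, hja⟩ := Finset.mem_filter.1 hj
    have h1 : (1:ℝ) ≤ Real.exp (-(t*a)) * Real.exp (t * ((n:ℝ) - 2*j)) := by
      rw [← Real.exp_add]
      refine Real.one_le_exp ?_
      nlinarith
    calc (n.choose j : ℝ)/2^n = (n.choose j : ℝ)/2^n * 1 := by ring
      _ ≤ (n.choose j : ℝ)/2^n * (Real.exp (-(t*a)) * Real.exp (t * ((n:ℝ) - 2*j))) := by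
          refine mul_le_mul_of_nonneg_left h1 (by positivity)
      _ = Real.exp (-(t*a)) * ((n.choose j : ℝ)/2^n * Real.exp (t * ((n:ℝ) - 2*j))) := by ring
  have step2 : ∑ j ∈ Finset.range (n+1), (n.choose j : ℝ)/2^n * Real.exp (t * ((n:ℝ) - 2*j))
      = ((Real.exp (-t) + Real.exp t)/2)^n := by
    rw [div_pow, add_pow]
    rw [Finset.sum_div]
    refine Finset.sum_congr rfl fun j hj => ?_
    have hjn : j ≤ n := Nat.lt_succ_iff.1 (Finset.mem_range.1 hj)
    rw [← Real.exp_nat_mul, ← Real.exp_nat_mul, ← Real.exp_add]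
    have h2 : ((n - j : ℕ) : ℝ) = (n : ℝ) - j := by push_cast [Nat.cast_sub hjn]; ring
    rw [h2]
    have e1 : (j:ℝ) * -t + ((n:ℝ) - (j:ℝ)) * t = t * ((n:ℝ) - 2*j) := by ring
    rw [e1]
    ring
  have step3 : ((Real.exp (-t) + Real.exp t)/2)^n ≤ Real.exp (n * t^2/2) := by
    have hcosh : (Real.exp (-t) + Real.exp t)/2 = Real.cosh t := by
      rw [Real.cosh_eq]; ring
    rw [hcosh]
    calc (Real.cosh t)^n ≤ (Real.exp (t^2/2))^n := by
          refine pow_le_pow_left₀ (Real.cosh_pos (x := t)).le ?_ n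
          exact Real.cosh_le_exp_half_sq t
      _ = Real.exp (n * (t^2/2)) := by rw [Real.exp_nat_mul]
      _ = Real.exp (n * t^2/2) := by ring_nf
  calc ∑ j ∈ (Finset.range (n+1)).filter (fun j : ℕ => a ≤ (n:ℝ) - 2*(j:ℝ)), (n.choose j : ℝ)/2^n
      ≤ Real.exp (-(t*a)) * ((Real.exp (-t) + Real.exp t)/2)^n := by rw [← step2]; exact step1
    _ ≤ Real.exp (-(t*a)) * Real.exp (n * t^2/2) := by
        exact mul_le_mul_of_nonneg_left step3 (Real.exp_nonneg _)
    _ = Real.exp (-(t*a) + n * t^2/2) := by rw [← Real.exp_add]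
    _ = Real.exp (-a^2/(2*n)) := by
        congr 1
        rw [ht]
        field_simp
        ring

lemma tail_other_side (n : ℕ) (hn : 1 ≤ n) {a : ℝ} (ha : 0 ≤ a) :
    ∑ j ∈ (Finset.range (n+1)).filter (fun j : ℕ => a ≤ 2*(j:ℝ) - (n:ℝ)), (n.choose j : ℝ)/2^n
      ≤ Real.exp (-a^2/(2*n)) := by
  refine le_trans (le_of_eq ?_) (tail_one_sided n hn ha)
  refine Finset.sum_nbij' (fun j => n - j) (fun j => n - j) ?_ ?_ ?_ ?_ ?_
  · intro j hj
    obtain ⟨hjr, hja⟩ := Finset.mem_filter.1 hj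
    have hjn : j ≤ n := Nat.lt_succ_iff.1 (Finset.mem_range.1 hjr)
    have h2 : ((n - j : ℕ) : ℝ) = (n : ℝ) - j := by push_cast [Nat.cast_sub hjn]; ring
    refine Finset.mem_filter.2 ⟨Finset.mem_range.2 (show n - j < n + 1 by omega), ?_⟩
    show a ≤ (n:ℝ) - 2*((n - j : ℕ) : ℝ)
    rw [h2]
    linarith
  · intro j hj
    obtain ⟨hjr, hja⟩ := Finset.mem_filter.1 hj
    have hjn : j ≤ n := Nat.lt_succ_iff.1 (Finset.mem_range.1 hjr)
    have h2 : ((n - j : ℕ) : ℝ) = (n : ℝ) - j := by push_cast [Nat.cast_sub hjn]; ring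
    refine Finset.mem_filter.2 ⟨Finset.mem_range.2 (show n - j < n + 1 by omega), ?_⟩
    show a ≤ 2*((n - j : ℕ) : ℝ) - (n:ℝ)
    rw [h2]
    linarith
  · intro j hj
    obtain ⟨hjr, _⟩ := Finset.mem_filter.1 hj
    have hjn : j ≤ n := Nat.lt_succ_iff.1 (Finset.mem_range.1 hjr)
    show n - (n - j) = j
    omega
  · intro j hj
    obtain ⟨hjr, _⟩ := Finset.mem_filter.1 hj
    have hjn : j ≤ n := Nat.lt_succ_iff.1 (Finset.mem_range.1 hjr)
    show n - (n - j) = j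
    omega
  · intro j hj
    obtain ⟨hjr, _⟩ := Finset.mem_filter.1 hj
    have hjn : j ≤ n := Nat.lt_succ_iff.1 (Finset.mem_range.1 hjr)
    show (n.choose j : ℝ)/2^n = (n.choose (n - j) : ℝ)/2^n
    rw [Nat.choose_symm hjn]

lemma tail_two_sided (n : ℕ) (hn : 1 ≤ n) {a : ℝ} (ha : 0 ≤ a) :
    ∑ j ∈ (Finset.range (n+1)).filter (fun j : ℕ => a ≤ |(n:ℝ) - 2*(j:ℝ)|), (n.choose j : ℝ)/2^n
      ≤ 2 * Real.exp (-a^2/(2*n)) := by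
  classical
  set s1 := (Finset.range (n+1)).filter (fun j : ℕ => a ≤ (n:ℝ) - 2*(j:ℝ)) with hs1
  set s2 := (Finset.range (n+1)).filter (fun j : ℕ => a ≤ 2*(j:ℝ) - (n:ℝ)) with hs2
  have hsub : (Finset.range (n+1)).filter (fun j : ℕ => a ≤ |(n:ℝ) - 2*(j:ℝ)|) ⊆ s1 ∪ s2 := by
    intro j hj
    obtain ⟨hjr, hja⟩ := Finset.mem_filter.1 hj
    rcases abs_cases ((n:ℝ) - 2*(j:ℝ)) with ⟨he, _⟩ | ⟨he, _⟩
    · exact Finset.mem_union_left _ (Finset.mem_filter.2 ⟨hjr, by rw [← he]; exact hja⟩)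
    · refine Finset.mem_union_right _ (Finset.mem_filter.2 ⟨hjr, ?_⟩)
      rw [he] at hja; linarith
  have hnn : ∀ j ∈ s1 ∪ s2, (0:ℝ) ≤ (n.choose j : ℝ)/2^n := fun j _ => by positivity
  calc ∑ j ∈ (Finset.range (n+1)).filter (fun j : ℕ => a ≤ |(n:ℝ) - 2*(j:ℝ)|),
        (n.choose j : ℝ)/2^n
      ≤ ∑ j ∈ s1 ∪ s2, (n.choose j : ℝ)/2^n :=
        Finset.sum_le_sum_of_subset_of_nonneg hsub (fun j hj _ => hnn j hj)
    _ ≤ ∑ j ∈ s1, (n.choose j : ℝ)/2^n + ∑ j ∈ s2, (n.choose j : ℝ)/2^n := by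
        have h := Finset.sum_union_inter (s₁ := s1) (s₂ := s2)
          (f := fun j => (n.choose j : ℝ)/2^n)
        have hint : (0:ℝ) ≤ ∑ j ∈ s1 ∩ s2, (n.choose j : ℝ)/2^n :=
          Finset.sum_nonneg fun j _ => by positivity
        linarith
    _ ≤ Real.exp (-a^2/(2*n)) + Real.exp (-a^2/(2*n)) :=
        add_le_add (tail_one_sided n hn ha) (tail_other_side n hn ha)
    _ = 2 * Real.exp (-a^2/(2*n)) := by ring

open Polynomial Polynomial.Chebyshev in
lemma natDegree_T_le : ∀ k : ℕ, (T ℝ (k:ℤ)).natDegree ≤ k := by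
  intro k
  induction k using Nat.twoStepInduction with
  | zero => simp [T_zero]
  | one => simp [T_one]
  | more k ih1 ih2 =>
      have hcast : ((k + 2 : ℕ) : ℤ) = (k:ℤ) + 2 := by push_cast; ring
      rw [hcast, T_add_two]
      refine le_trans (natDegree_sub_le _ _) ?_
      refine max_le ?_ (le_trans ih1 (by omega))
      refine le_trans natDegree_mul_le ?_
      have h1 : (2 * X : ℝ[X]).natDegree ≤ 1 := by
        refine le_trans natDegree_mul_le ?_
        simp
      have hcast2 : ((k + 1 : ℕ) : ℤ) = (k:ℤ) + 1 := by push_cast; ring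
      rw [← hcast2]
      omega

open Polynomial Polynomial.Chebyshev in
lemma abs_T_eval_le (k : ℤ) {x : ℝ} (h1 : -1 ≤ x) (h2 : x ≤ 1) :
    |(T ℝ k).eval x| ≤ 1 := by
  rw [← Real.cos_arccos h1 h2, T_real_cos]
  exact Real.abs_cos_le_one _



section Stage6
open Polynomial Polynomial.Chebyshev
variable {G : Type*} [Group G] {S : Set G} {μ : G → ℝ}

theorem cv_bound [Nontrivial G] (hS : IsGenSet S) (hμ : IsStepDist μ)
    (n : ℕ) (hn : 1 ≤ n) (x : G) :
    convPow μ n x ≤ 2 * Real.exp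
      (-(wordLength S x : ℝ)^2 / (2 * n * (Kc hS hμ : ℝ)^2)) := by
  classical
  set K : ℕ := Kc hS hμ with hK
  have hK1 : 1 ≤ K := Kc_pos hS hμ
  have hKR : (1:ℝ) ≤ (K:ℝ) := by exact_mod_cast hK1
  set B : Finset G := ballF hS (n * K) with hB
  by_cases hxB : x ∈ B
  swap
  · rw [cp_zero_of hS hμ (fun hc => hxB (mem_ballF.2 hc))]
    positivity
  -- the finite matrix
  set ι := {y // y ∈ B}
  have he : (1:G) ∈ B := mem_ballF.2 (by simp [wl_one])
  set e : ι := ⟨1, he⟩ with hedef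
  set xx : ι := ⟨x, hxB⟩ with hxx
  set A : Matrix ι ι ℝ := fun g h => μ ((g:G)⁻¹ * (h:G)) with hA
  have hherm : A.IsHermitian := by
    refine Matrix.ext fun g h => ?_
    show star (A h g) = A g h
    rw [star_trivial]
    show μ ((h:G)⁻¹ * g) = μ ((g:G)⁻¹ * h)
    rw [← hμ.symm, mul_inv_rev, inv_inv]
  have hAnn : ∀ g h : ι, 0 ≤ A g h := fun g h => hμ.nonneg _
  -- row sums at most 1
  have hrow : ∀ g : ι, ∑ h : ι, A g h ≤ 1 := by
    intro g
    have hsum : ∑ h : ι, A g h = ∑ h ∈ B, μ ((g:G)⁻¹ * h) :=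
      Finset.sum_coe_sort B (fun h => μ ((g:G)⁻¹ * h))
    rw [hsum]
    have hsummable : Summable (fun h : G => μ ((g:G)⁻¹ * h)) := by
      refine summable_of_ne_finset_zero (s := (Dmu hμ).image (fun d => (g:G) * d)) ?_
      intro b hb
      by_contra h0
      refine hb (Finset.mem_image.2 ⟨(g:G)⁻¹ * b, mem_Dmu.2 h0, by group⟩)
    calc ∑ h ∈ B, μ ((g:G)⁻¹ * h) ≤ ∑' h : G, μ ((g:G)⁻¹ * h) :=
          Summable.sum_le_tsum B (fun h _ => hμ.nonneg _) hsummable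
      _ = 1 := tsum_mu_shift hμ (g:G)
  -- spectral data
  set lam : ι → ℝ := hherm.eigenvalues with hlam
  set u : ι → ι → ℝ := fun i => (WithLp.equiv 2 _) (hherm.eigenvectorBasis i) with hu
  have heig : ∀ i, A.mulVec (u i) = lam i • u i := fun i => hherm.mulVec_eigenvectorBasis i
  -- Parseval
  have hpar : ∀ g h : ι, ∑ i, (u i g) * (u i h) = if g = h then (1:ℝ) else 0 := by
    intro g h
    have := (hherm.eigenvectorBasis).sum_inner_mul_inner
      (EuclideanSpace.single g (1:ℝ)) (EuclideanSpace.single h (1:ℝ))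
    have h1 : ∀ i, (inner ℝ (EuclideanSpace.single g (1:ℝ)) (hherm.eigenvectorBasis i) : ℝ)
        = u i g := by
      intro i
      rw [EuclideanSpace.inner_single_left]
      simp [hu]
    have h2 : ∀ i, (inner ℝ (hherm.eigenvectorBasis i) (EuclideanSpace.single h (1:ℝ)) : ℝ)
        = u i h := by
      intro i
      rw [real_inner_comm, EuclideanSpace.inner_single_left]
      simp [hu]
    have h3 : (inner ℝ (EuclideanSpace.single g (1:ℝ)) (EuclideanSpace.single h (1:ℝ)) : ℝ)
        = if g = h then 1 else 0 := by
      rw [EuclideanSpace.inner_single_left]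
      simp only [map_one, one_mul, EuclideanSpace.single_apply]
    rw [← h3]
    rw [← this]
    exact Finset.sum_congr rfl fun i _ => by rw [h1 i, h2 i]
  have hparg : ∀ g : ι, ∑ i, (u i g)^2 = 1 := by
    intro g
    have h := hpar g g
    rw [if_pos rfl] at h
    rw [← h]
    exact Finset.sum_congr rfl fun i _ => by ring
  have hnorm : ∀ i : ι, ∑ g, (u i g)^2 = 1 := by
    intro i
    have h1 : ‖hherm.eigenvectorBasis i‖ = 1 := (hherm.eigenvectorBasis).orthonormal.1 i
    have h2 := EuclideanSpace.norm_eq (hherm.eigenvectorBasis i)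
    rw [h1] at h2
    have h3 : ∑ g, ‖(hherm.eigenvectorBasis i) g‖^2 = 1 :=
      Real.sqrt_eq_one.1 h2.symm
    rw [← h3]
    refine Finset.sum_congr rfl fun g _ => ?_
    rw [Real.norm_eq_abs, sq_abs]
    rfl
  -- eigenvalue bound
  have hlam1 : ∀ i, |lam i| ≤ 1 := by
    intro i
    obtain ⟨g0, _, hg0⟩ := Finset.exists_max_image Finset.univ (fun g => |u i g|)
      ⟨e, Finset.mem_univ e⟩
    set M := |u i g0| with hM
    have hMnn : 0 ≤ M := abs_nonneg _
    have hMpos : 0 < M := by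
      rcases eq_or_lt_of_le hMnn with h0 | h
      swap
      · exact h
      · exfalso
        have hz : ∀ g : ι, u i g = 0 := by
          intro g
          have := hg0 g (Finset.mem_univ g)
          rw [← h0] at this
          exact abs_eq_zero.1 (le_antisymm this (abs_nonneg _))
        have := hnorm i
        simp [hz] at this
    have happ : lam i * u i g0 = ∑ h : ι, A g0 h * u i h := by
      have hcf := congrFun (heig i) g0
      have h1 : (A.mulVec (u i)) g0 = ∑ h : ι, A g0 h * u i h := by
        simp [Matrix.mulVec, dotProduct]
      have h2 : (lam i • u i) g0 = lam i * u i g0 := rfl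
      rw [h1, h2] at hcf
      exact hcf.symm
    have hbound : |lam i| * M ≤ M := by
      calc |lam i| * M = |lam i * u i g0| := by rw [abs_mul]
        _ = |∑ h : ι, A g0 h * u i h| := by rw [happ]
        _ ≤ ∑ h : ι, |A g0 h * u i h| := Finset.abs_sum_le_sum_abs _ _
        _ ≤ ∑ h : ι, A g0 h * M := by
            refine Finset.sum_le_sum fun h _ => ?_
            rw [abs_mul, abs_of_nonneg (hAnn g0 h)]
            exact mul_le_mul_of_nonneg_left (hg0 h (Finset.mem_univ h)) (hAnn g0 h)
        _ = (∑ h : ι, A g0 h) * M := by rw [Finset.sum_mul]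
        _ ≤ 1 * M := mul_le_mul_of_nonneg_right (hrow g0) hMnn
        _ = M := one_mul M
    exact le_of_mul_le_mul_right (by linarith) hMpos
  -- power formula
  have hpow : ∀ m : ℕ, ∀ g y : ι, (A^m) g y = ∑ i, (lam i)^m * (u i g * u i y) := by
    intro m
    induction m with
    | zero =>
        intro g y
        rw [pow_zero]
        rw [Matrix.one_apply]
        rw [← hpar g y]
        exact Finset.sum_congr rfl fun i _ => by ring
    | succ m ih =>
        intro g y
        rw [pow_succ']
        rw [Matrix.mul_apply]
        calc ∑ h : ι, A g h * (A^m) h y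
            = ∑ h : ι, A g h * ∑ i, (lam i)^m * (u i h * u i y) := by
              exact Finset.sum_congr rfl fun h _ => by rw [ih h y]
          _ = ∑ h : ι, ∑ i, (lam i)^m * u i y * (A g h * u i h) := by
              refine Finset.sum_congr rfl fun h _ => ?_
              rw [Finset.mul_sum]
              exact Finset.sum_congr rfl fun i _ => by ring
          _ = ∑ i, ∑ h : ι, (lam i)^m * u i y * (A g h * u i h) := Finset.sum_comm
          _ = ∑ i, (lam i)^m * u i y * (lam i * u i g) := by
              refine Finset.sum_congr rfl fun i _ => ?_
              rw [← Finset.mul_sum]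
              congr 1
              have h1 : (A.mulVec (u i)) g = ∑ h : ι, A g h * u i h := by
                simp [Matrix.mulVec, dotProduct]
              rw [← h1, heig i]
              simp
          _ = ∑ i, (lam i)^(m+1) * (u i g * u i y) := by
              refine Finset.sum_congr rfl fun i _ => ?_
              ring
  -- entries of powers are the random walk distribution
  have hAm : ∀ m : ℕ, m ≤ n → ∀ y : ι, (A^m) e y = convPow μ m (y:G) := by
    intro m
    induction m with
    | zero =>
        intro _ y
        rw [pow_zero, Matrix.one_apply]
        show _ = if (y:G) = 1 then (1:ℝ) else 0
        by_cases hy : (y:G) = 1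
        · have hey : e = y := Subtype.ext (show ((1:G)) = (y:G) from hy.symm)
          rw [if_pos hey, if_pos hy]
        · have hey : ¬ (e = y) := fun hc => hy (by rw [← hc])
          rw [if_neg hey, if_neg hy]
    | succ m ih =>
        intro hm y
        have hmn : m ≤ n := Nat.le_of_succ_le hm
        rw [pow_succ, Matrix.mul_apply]
        have hstep : ∀ h : ι, (A^m) e h * A h y = convPow μ m (h:G) * μ ((h:G)⁻¹ * y) := by
          intro h
          rw [ih hmn h]
        rw [Finset.sum_congr rfl fun h _ => hstep h]
        have h1 : ∑ h : ι, convPow μ m (h:G) * μ ((h:G)⁻¹ * y)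
            = ∑ h ∈ B, convPow μ m h * μ (h⁻¹ * y) :=
          Finset.sum_coe_sort B (fun h => convPow μ m h * μ (h⁻¹ * (y:G)))
        rw [h1]
        rw [cp_succ_sum hS hμ m (y:G)]
        refine (Finset.sum_subset ?_ ?_).symm
        · intro h hh
          refine mem_ballF.2 (le_trans (mem_ballF.1 hh) ?_)
          exact Nat.mul_le_mul_right K hmn
        · intro h _ hh
          rw [cp_zero_of hS hμ (fun hc => hh (mem_ballF.2 hc)), zero_mul]
  -- Chebyshev entry sums
  set cheb : ℤ → ℝ := fun k => ∑ i, (T ℝ k).eval (lam i) * (u i e * u i xx) with hcheb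
  have hchebneg : ∀ m : ℤ, cheb (-m) = cheb m := by
    intro m
    simp only [hcheb, T_neg]
  have hcs : ∑ i, |u i e| * |u i xx| ≤ 1 := by
    have h2 := Finset.sum_mul_sq_le_sq_mul_sq Finset.univ (fun i => |u i e|) (fun i => |u i xx|)
    have h3 : ∑ i, |u i e|^2 = 1 := by
      rw [← hparg e]
      exact Finset.sum_congr rfl fun i _ => by rw [sq_abs]
    have h4 : ∑ i, |u i xx|^2 = 1 := by
      rw [← hparg xx]
      exact Finset.sum_congr rfl fun i _ => by rw [sq_abs]
    have h5 : 0 ≤ ∑ i, |u i e| * |u i xx| :=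
      Finset.sum_nonneg fun i _ => mul_nonneg (abs_nonneg _) (abs_nonneg _)
    rw [h3, h4] at h2
    nlinarith
  have hchb : ∀ k : ℤ, |cheb k| ≤ 1 := by
    intro k
    calc |cheb k| ≤ ∑ i, |(T ℝ k).eval (lam i) * (u i e * u i xx)| :=
          Finset.abs_sum_le_sum_abs _ _
      _ ≤ ∑ i, |u i e| * |u i xx| := by
          refine Finset.sum_le_sum fun i _ => ?_
          have hb := abs_le.1 (hlam1 i)
          have hT := abs_T_eval_le k hb.1 hb.2
          rw [abs_mul, abs_mul]
          calc |(T ℝ k).eval (lam i)| * (|u i e| * |u i xx|)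
              ≤ 1 * (|u i e| * |u i xx|) := by
                refine mul_le_mul_of_nonneg_right hT ?_
                positivity
            _ = |u i e| * |u i xx| := one_mul _
      _ ≤ 1 := hcs
  have hvanish : ∀ k : ℕ, k ≤ n → k * K < wordLength S x → cheb (k:ℤ) = 0 := by
    intro k hkn hkx
    have hdeg : (T ℝ (k:ℤ)).natDegree < k+1 := Nat.lt_succ_of_le (natDegree_T_le k)
    calc cheb (k:ℤ)
        = ∑ i, (∑ m ∈ Finset.range (k+1), (T ℝ (k:ℤ)).coeff m * (lam i)^m)
            * (u i e * u i xx) := by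
          refine Finset.sum_congr rfl fun i _ => ?_
          rw [Polynomial.eval_eq_sum_range' hdeg (lam i)]
      _ = ∑ i, ∑ m ∈ Finset.range (k+1), (T ℝ (k:ℤ)).coeff m *
            ((lam i)^m * (u i e * u i xx)) := by
          refine Finset.sum_congr rfl fun i _ => ?_
          rw [Finset.sum_mul]
          exact Finset.sum_congr rfl fun m _ => by ring
      _ = ∑ m ∈ Finset.range (k+1), ∑ i, (T ℝ (k:ℤ)).coeff m *
            ((lam i)^m * (u i e * u i xx)) := Finset.sum_comm
      _ = ∑ m ∈ Finset.range (k+1), (T ℝ (k:ℤ)).coeff m *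
            ∑ i, (lam i)^m * (u i e * u i xx) := by
          exact Finset.sum_congr rfl fun m _ => (Finset.mul_sum _ _ _).symm
      _ = 0 := by
          refine Finset.sum_eq_zero fun m hm => ?_
          have hmk : m ≤ k := Nat.lt_succ_iff.1 (Finset.mem_range.1 hm)
          rw [← hpow m e xx, hAm m (le_trans hmk hkn) xx]
          have hz : convPow μ m x = 0 := by
            refine cp_zero_of hS hμ ?_
            intro hc
            have h6 : m * K ≤ k * K := Nat.mul_le_mul_right K hmk
            exact Nat.lt_irrefl _ (lt_of_le_of_lt (le_trans hc h6) hkx)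
          show (T ℝ (k:ℤ)).coeff m * convPow μ m x = 0
          rw [hz, mul_zero]
  -- expansion of the power via Chebyshev
  have hxform : convPow μ n x = ∑ j ∈ Finset.range (n+1),
      ((n.choose j:ℝ)/2^n) * cheb ((n:ℤ) - 2*j) := by
    have h0 : convPow μ n x = (A^n) e xx := (hAm n le_rfl xx).symm
    rw [h0, hpow n e xx]
    have hexp : ∀ i, (lam i)^n = ∑ j ∈ Finset.range (n+1),
        ((n.choose j:ℝ)/2^n) * (T ℝ ((n:ℤ) - 2*j)).eval (lam i) := by
      intro i
      have hb := abs_le.1 (hlam1 i)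
      have hcosθ : Real.cos (Real.arccos (lam i)) = lam i := Real.cos_arccos hb.1 hb.2
      calc (lam i)^n = (Real.cos (Real.arccos (lam i)))^n := by rw [hcosθ]
        _ = ∑ j ∈ Finset.range (n+1), ((n.choose j:ℝ)/2^n) *
              Real.cos (((n:ℝ) - 2*j) * Real.arccos (lam i)) :=
            cos_pow_expand (Real.arccos (lam i)) n
        _ = ∑ j ∈ Finset.range (n+1), ((n.choose j:ℝ)/2^n) *
              (T ℝ ((n:ℤ) - 2*j)).eval (lam i) := by
            refine Finset.sum_congr rfl fun j _ => ?_
            congr 1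
            have hTj : (T ℝ ((n:ℤ) - 2*j)).eval (lam i) =
                Real.cos (((((n:ℤ) - 2*(j:ℤ)) : ℤ) : ℝ) * Real.arccos (lam i)) := by
              conv_lhs => rw [← hcosθ]
              rw [T_real_cos]
            rw [hTj]
            congr 1
            push_cast
            ring
    calc ∑ i, (lam i)^n * (u i e * u i xx)
        = ∑ i, ∑ j ∈ Finset.range (n+1), ((n.choose j:ℝ)/2^n) *
            (T ℝ ((n:ℤ) - 2*j)).eval (lam i) * (u i e * u i xx) := by
          refine Finset.sum_congr rfl fun i _ => ?_
          rw [hexp i, Finset.sum_mul]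
      _ = ∑ j ∈ Finset.range (n+1), ∑ i, ((n.choose j:ℝ)/2^n) *
            (T ℝ ((n:ℤ) - 2*j)).eval (lam i) * (u i e * u i xx) := Finset.sum_comm
      _ = ∑ j ∈ Finset.range (n+1), ((n.choose j:ℝ)/2^n) * cheb ((n:ℤ) - 2*j) := by
          refine Finset.sum_congr rfl fun j _ => ?_
          rw [hcheb]
          simp only
          rw [Finset.mul_sum]
          exact Finset.sum_congr rfl fun i _ => by ring
  -- split and bound
  set a : ℝ := (wordLength S x : ℝ) / K with hadef
  have haK : (0:ℝ) < K := by positivity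
  have ha : 0 ≤ a := div_nonneg (Nat.cast_nonneg _) (le_of_lt haK)
  have hbound : convPow μ n x ≤
      ∑ j ∈ (Finset.range (n+1)).filter (fun j : ℕ => a ≤ |(n:ℝ) - 2*(j:ℝ)|),
        (n.choose j:ℝ)/2^n := by
    rw [hxform]
    rw [← Finset.sum_filter_add_sum_filter_not (Finset.range (n+1))
      (fun j : ℕ => a ≤ |(n:ℝ) - 2*(j:ℝ)|)]
    have hzero : ∑ j ∈ (Finset.range (n+1)).filter
        (fun j : ℕ => ¬ (a ≤ |(n:ℝ) - 2*(j:ℝ)|)), ((n.choose j:ℝ)/2^n) * cheb ((n:ℤ) - 2*j)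
        = 0 := by
      refine Finset.sum_eq_zero fun j hj => ?_
      obtain ⟨hjr, hja⟩ := Finset.mem_filter.1 hj
      push_neg at hja
      have hjn : j ≤ n := Nat.lt_succ_iff.1 (Finset.mem_range.1 hjr)
      set m : ℕ := ((n:ℤ) - 2*(j:ℤ)).natAbs with hm
      have hcast : |(n:ℝ) - 2*(j:ℝ)| = (m:ℝ) := by
        rw [hm]
        rw [Nat.cast_natAbs]
        push_cast
        ring_nf
      have hmn : m ≤ n := by omega
      have hmK : m * K < wordLength S x := by
        have h1 : (m:ℝ) < a := by rw [← hcast]; exact hja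
        have h2 : (m:ℝ) * (K:ℝ) < (wordLength S x : ℝ) := by
          rw [hadef] at h1
          calc (m:ℝ) * (K:ℝ) < ((wordLength S x : ℝ)/K) * K :=
            mul_lt_mul_of_pos_right h1 haK
            _ = (wordLength S x : ℝ) := by field_simp
        exact_mod_cast h2
      have hT0 : cheb ((n:ℤ) - 2*j) = 0 := by
        rcases Int.natAbs_eq ((n:ℤ) - 2*(j:ℤ)) with he' | he'
        · rw [show ((n:ℤ) - 2*j) = (m:ℤ) from he']
          exact hvanish m hmn hmK
        · rw [show ((n:ℤ) - 2*j) = -(m:ℤ) from he', hchebneg]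
          exact hvanish m hmn hmK
      rw [hT0, mul_zero]
    rw [hzero, add_zero]
    refine Finset.sum_le_sum fun j hj => ?_
    have h1 : cheb ((n:ℤ) - 2*j) ≤ 1 := le_trans (le_abs_self _) (hchb _)
    have h2 : (0:ℝ) ≤ (n.choose j:ℝ)/2^n := by positivity
    calc ((n.choose j:ℝ)/2^n) * cheb ((n:ℤ) - 2*j) ≤ ((n.choose j:ℝ)/2^n) * 1 :=
          mul_le_mul_of_nonneg_left h1 h2
      _ = (n.choose j:ℝ)/2^n := mul_one _
  calc convPow μ n x ≤ _ := hbound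
    _ ≤ 2 * Real.exp (-a^2/(2*n)) := tail_two_sided n hn ha
    _ = 2 * Real.exp (-(wordLength S x : ℝ)^2 / (2 * n * (K:ℝ)^2)) := by
        congr 1
        have hKne : (K:ℝ) ≠ 0 := ne_of_gt haK
        rw [hadef, div_pow]
        rw [neg_div, neg_div, div_div]
        ring_nf

end Stage6

section Stage7
variable {G : Type*} [Group G] {S : Set G} {μ : G → ℝ}

lemma second_inequality [Nontrivial G] (hS : IsGenSet S) (hμ : IsStepDist μ)
    (n : ℕ) (hn : 1 ≤ n) :
    speed S μ n ≤ Real.sqrt (2 * (Kc hS hμ : ℝ)^2) *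
      Real.sqrt (n * (entropy (convPow μ n) + 1)) := by
  classical
  set K : ℕ := Kc hS hμ with hK
  have hK1 : 1 ≤ K := Kc_pos hS hμ
  have hKpos : (0:ℝ) < (K:ℝ) := by exact_mod_cast hK1
  have hnpos : (0:ℝ) < (n:ℝ) := by exact_mod_cast hn
  set B : Finset G := ballF hS (n * K) with hB
  set p : G → ℝ := convPow μ n with hp
  set w : G → ℝ := fun g => (wordLength S g : ℝ) with hw
  have hwnn : ∀ g, 0 ≤ w g := fun g => Nat.cast_nonneg _
  have hpnn : ∀ g, 0 ≤ p g := fun g => cp_nonneg hμ n g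
  -- pointwise entropy lower bound from Carne--Varopoulos
  have hkey : ∀ g : G, p g * (w g ^ 2 / (2 * n * (K:ℝ)^2) - Real.log 2)
      ≤ Real.negMulLog (p g) := by
    intro g
    rcases eq_or_lt_of_le (hpnn g) with h0 | hpos
    · rw [← h0]
      simp [Real.negMulLog_zero]
    · have hcv := cv_bound hS hμ n hn g
      have hlog : Real.log (p g) ≤ Real.log 2 + (-(w g)^2 / (2 * n * (K:ℝ)^2)) := by
        calc Real.log (p g) ≤ Real.log (2 * Real.exp (-(w g)^2 / (2 * n * (K:ℝ)^2))) :=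
              Real.log_le_log hpos hcv
          _ = Real.log 2 + (-(w g)^2 / (2 * n * (K:ℝ)^2)) := by
              rw [Real.log_mul (by norm_num) (Real.exp_ne_zero _), Real.log_exp]
      rw [Real.negMulLog, neg_mul]
      have h2 : w g ^2 / (2 * n * (K:ℝ)^2) - Real.log 2 ≤ -Real.log (p g) := by
        have hne : -(w g)^2 / (2 * n * (K:ℝ)^2) = -((w g)^2 / (2 * n * (K:ℝ)^2)) := by
          rw [neg_div]
        rw [hne] at hlog
        linarith
      calc p g * (w g ^ 2 / (2 * n * (K:ℝ)^2) - Real.log 2)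
          ≤ p g * (-Real.log (p g)) := mul_le_mul_of_nonneg_left h2 (le_of_lt hpos)
        _ = -(p g * Real.log (p g)) := by ring
  -- sum it
  have hsum1 : ∑ g ∈ B, p g * (w g ^ 2 / (2 * n * (K:ℝ)^2) - Real.log 2)
      ≤ entropy (convPow μ n) := by
    rw [entropy_eq hS hμ n, ← hB, ← hp]
    exact Finset.sum_le_sum fun g _ => hkey g
  have hsp : ∑ g ∈ B, p g = 1 := cp_sum_one hS hμ n
  have hexpand : ∑ g ∈ B, p g * (w g ^ 2 / (2 * n * (K:ℝ)^2) - Real.log 2)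
      = (∑ g ∈ B, p g * w g ^ 2) / (2 * n * (K:ℝ)^2) - Real.log 2 * ∑ g ∈ B, p g := by
    rw [Finset.sum_div, Finset.mul_sum, ← Finset.sum_sub_distrib]
    refine Finset.sum_congr rfl fun g _ => ?_
    rw [mul_sub]
    rw [mul_div_assoc]
    ring
  -- Cauchy--Schwarz
  have hCS : (speed S μ n)^2 ≤ ∑ g ∈ B, p g * w g ^ 2 := by
    have h1 := Finset.sum_mul_sq_le_sq_mul_sq B (fun g => Real.sqrt (p g))
      (fun g => Real.sqrt (p g) * w g)
    have h2 : ∀ g, Real.sqrt (p g) * (Real.sqrt (p g) * w g) = p g * w g := by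
      intro g
      rw [← mul_assoc, Real.mul_self_sqrt (hpnn g)]
    have h3 : ∀ g, Real.sqrt (p g) ^ 2 = p g := fun g => Real.sq_sqrt (hpnn g)
    have h4 : ∀ g, (Real.sqrt (p g) * w g) ^ 2 = p g * w g ^ 2 := by
      intro g
      rw [mul_pow, h3]
    rw [speed_eq hS hμ n, ← hB, ← hp]
    calc (∑ g ∈ B, p g * w g)^2
        = (∑ g ∈ B, Real.sqrt (p g) * (Real.sqrt (p g) * w g))^2 := by
          rw [Finset.sum_congr rfl fun g _ => (h2 g).symm]
      _ ≤ (∑ g ∈ B, Real.sqrt (p g) ^ 2) * ∑ g ∈ B, (Real.sqrt (p g) * w g) ^ 2 := h1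
      _ = (∑ g ∈ B, p g) * ∑ g ∈ B, p g * w g ^ 2 := by
          rw [Finset.sum_congr rfl fun g _ => h3 g, Finset.sum_congr rfl fun g _ => h4 g]
      _ = ∑ g ∈ B, p g * w g ^ 2 := by rw [hsp, one_mul]
  -- combine
  have hHnn : 0 ≤ entropy (convPow μ n) := entropy_nonneg hS hμ n
  have hfinal : (speed S μ n)^2 ≤ 2 * (K:ℝ)^2 * (n * (entropy (convPow μ n) + 1)) := by
    have h5 : (∑ g ∈ B, p g * w g ^ 2) ≤
        (entropy (convPow μ n) + Real.log 2) * (2 * n * (K:ℝ)^2) := by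
      have h6 := le_trans (le_of_eq hexpand.symm) hsum1
      rw [hsp, mul_one] at h6
      have h7 : (0:ℝ) < 2 * n * (K:ℝ)^2 := by positivity
      have h8 : (∑ g ∈ B, p g * w g ^ 2) / (2 * n * (K:ℝ)^2)
          ≤ entropy (convPow μ n) + Real.log 2 := by linarith
      rw [div_le_iff₀ h7] at h8
      exact h8
    have hlog2 : Real.log 2 ≤ 1 := by
      have := Real.log_le_sub_one_of_pos (by norm_num : (0:ℝ) < 2)
      linarith
    calc (speed S μ n)^2 ≤ ∑ g ∈ B, p g * w g ^ 2 := hCS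
      _ ≤ (entropy (convPow μ n) + Real.log 2) * (2 * n * (K:ℝ)^2) := h5
      _ ≤ (entropy (convPow μ n) + 1) * (2 * n * (K:ℝ)^2) := by
          refine mul_le_mul_of_nonneg_right (by linarith) (by positivity)
      _ = 2 * (K:ℝ)^2 * (n * (entropy (convPow μ n) + 1)) := by ring
  have hsn : 0 ≤ speed S μ n := speed_nonneg hS hμ n
  calc speed S μ n = Real.sqrt ((speed S μ n)^2) := (Real.sqrt_sq hsn).symm
    _ ≤ Real.sqrt (2 * (K:ℝ)^2 * (n * (entropy (convPow μ n) + 1))) :=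
        Real.sqrt_le_sqrt hfinal
    _ = Real.sqrt (2 * (K:ℝ)^2) * Real.sqrt (n * (entropy (convPow μ n) + 1)) :=
        Real.sqrt_mul (by positivity) _

end Stage7

end SER

/-- **The speed–entropy relation.** For a symmetric finitely supported random walk on an
infinite finitely generated group there is `C > 0` with
`H(X_n) ≤ C (E|X_n| + 1)` and `E|X_n| ≤ C √(n (H(X_n) + 1))` for all `n ≥ 1`. -/
theorem speed_entropy_relation
    (G : Type*) [Group G] [Infinite G] (S : Set G) (μ : G → ℝ)
    (hS : IsGenSet S) (hμ : IsStepDist μ) :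
    ∃ C : ℝ, 0 < C ∧
      ∀ n : ℕ, 1 ≤ n →
        entropy (convPow μ n) ≤ C * (speed S μ n + 1) ∧
        speed S μ n ≤ C * Real.sqrt (n * (entropy (convPow μ n) + 1)) := by
  classical
  have hnt : Nontrivial G := inferInstance
  refine ⟨max (Real.log (SER.abase hS)) (Real.sqrt (2 * (SER.Kc hS hμ : ℝ)^2)), ?_, ?_⟩
  · have h1 : 0 < Real.log (SER.abase hS) :=
      Real.log_pos (lt_of_lt_of_le one_lt_two (SER.two_le_abase hS))
    exact lt_max_of_lt_left h1
  · intro n hn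
    constructor
    · calc entropy (convPow μ n) ≤ Real.log (SER.abase hS) * (speed S μ n + 1) :=
            SER.first_inequality hS hμ n
        _ ≤ max (Real.log (SER.abase hS)) (Real.sqrt (2 * (SER.Kc hS hμ : ℝ)^2))
              * (speed S μ n + 1) := by
            refine mul_le_mul_of_nonneg_right (le_max_left _ _) ?_
            have := SER.speed_nonneg hS hμ n
            linarith
    · calc speed S μ n ≤ Real.sqrt (2 * (SER.Kc hS hμ : ℝ)^2) *
              Real.sqrt (n * (entropy (convPow μ n) + 1)) :=
            SER.second_inequality hS hμ n hn
        _ ≤ max (Real.log (SER.abase hS)) (Real.sqrt (2 * (SER.Kc hS hμ : ℝ)^2))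
              * Real.sqrt (n * (entropy (convPow μ n) + 1)) :=
            mul_le_mul_of_nonneg_right (le_max_right _ _) (Real.sqrt_nonneg _)
end

section
/- Let G' and G'' be finitely generated groups with finite symmetric generating sets S' and S'' each containing the identity, and let X_n' and X_n'' be symmetric, finitely supported random walks on G' and G'' (step supports generating the groups). Suppose f, h : [1,∞) → (0,∞) satisfy h(n) ≼ f(n) ≼ √(n·h(n)/log(n+1)), and that E|X_n'| ≍ f(n), H(X_n') ≍ f(n)²·log(n+1)/n, and E|X_n''| ≍ H(X_n'') ≍ h(n). Then the product walk X_n = (X_n', X_n'') on G' × G'' (step distribution μ' ⊗ μ'', word length with respect to the generating set S' × S'') satisfies E|X_n| ≍ f(n) and H(X_n) ≍ h(n). -/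
open scoped BigOperators Classical

open scoped Pointwise

namespace PWAux

variable {G G' G'' : Type*} [Group G] [Group G'] [Group G'']

lemma conv_eq_zero (ν μ : G → ℝ) {g : G}
    (hg : g ∉ Function.support ν * Function.support μ) : conv ν μ g = 0 := by
  have : ∀ h : G, ν h * μ (h⁻¹ * g) = 0 := by
    intro h
    by_cases h1 : ν h = 0
    · simp [h1]
    by_cases h2 : μ (h⁻¹ * g) = 0
    · simp [h2]
    exact absurd ⟨h, h1, h⁻¹ * g, h2, by group⟩ hg
  simp [conv, this]

lemma support_conv (ν μ : G → ℝ) :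
    Function.support (conv ν μ) ⊆ Function.support ν * Function.support μ := by
  intro g hg
  by_contra hc
  exact hg (conv_eq_zero ν μ hc)

lemma convPow_support_finite (μ : G → ℝ) (hμ : (Function.support μ).Finite) :
    ∀ n, (Function.support (convPow μ n)).Finite
  | 0 => by
    apply (Set.finite_singleton (1 : G)).subset
    intro g hg
    simp only [Function.mem_support, convPow] at hg
    by_contra hne
    simp_all
  | n + 1 => ((convPow_support_finite μ hμ n).mul hμ).subset (support_conv _ _)

lemma convPow_nonneg (μ : G → ℝ) (hμ : ∀ g, 0 ≤ μ g) : ∀ n g, 0 ≤ convPow μ n g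
  | 0, g => by simp only [convPow]; split <;> norm_num
  | n + 1, g => tsum_nonneg fun h => mul_nonneg (convPow_nonneg μ hμ n h) (hμ _)

lemma tsum_conv (ν μ : G → ℝ) (hν : (Function.support ν).Finite)
    (hμ : (Function.support μ).Finite) (hν1 : ∑' g, ν g = 1) (hμ1 : ∑' g, μ g = 1) :
    ∑' g, conv ν μ g = 1 := by
  classical
  set A := hν.toFinset with hA
  set C := (hν.mul hμ).toFinset with hC
  have hCmem : ∀ {a b : G}, ν a ≠ 0 → μ b ≠ 0 → a * b ∈ C := by
    intro a b ha hb
    simp only [hC, Set.Finite.mem_toFinset]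
    exact Set.mul_mem_mul ha hb
  have h1 : ∑' g, conv ν μ g = ∑ g ∈ C, conv ν μ g := by
    apply tsum_eq_sum
    intro g hg
    apply conv_eq_zero
    intro hmem
    exact hg (by simpa [hC, Set.Finite.mem_toFinset] using hmem)
  have h2 : ∀ g, conv ν μ g = ∑ h ∈ A, ν h * μ (h⁻¹ * g) := by
    intro g
    apply tsum_eq_sum
    intro h hh
    have : ν h = 0 := by simpa [hA, Set.Finite.mem_toFinset] using hh
    simp [this]
  rw [h1]
  simp only [h2]
  rw [Finset.sum_comm]
  have h3 : ∀ h ∈ A, ∑ g ∈ C, ν h * μ (h⁻¹ * g) = ν h := by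
    intro h hhA
    rw [← Finset.mul_sum]
    by_cases hz : ν h = 0
    · simp [hz]
    have himg : ∑ g ∈ C, μ (h⁻¹ * g) = ∑ k ∈ C.image (fun g => h⁻¹ * g), μ k := by
      rw [Finset.sum_image (by intro x _ y _ hxy; exact mul_left_cancel hxy)]
    rw [himg]
    have : ∑ k ∈ C.image (fun g => h⁻¹ * g), μ k = ∑' k, μ k := by
      symm; apply tsum_eq_sum
      intro k hk
      by_contra hk0
      apply hk
      simp only [Finset.mem_image]
      exact ⟨h * k, hCmem hz hk0, by group⟩
    rw [this, hμ1, mul_one]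
  rw [Finset.sum_congr rfl h3]
  rw [← hν1]
  symm; apply tsum_eq_sum
  intro h hh
  simpa [hA, Set.Finite.mem_toFinset] using hh

lemma convPow_total (μ : G → ℝ) (hμ : (Function.support μ).Finite)
    (hμ1 : ∑' g, μ g = 1) : ∀ n, ∑' g, convPow μ n g = 1
  | 0 => by
    rw [show (convPow μ 0) = fun g : G => if g = 1 then (1:ℝ) else 0 from rfl]
    rw [tsum_eq_sum (s := {1}) (by intro b hb; simp at hb; simp [hb])]
    simp
  | n + 1 =>
    tsum_conv _ _ (convPow_support_finite μ hμ n) hμ (convPow_total μ hμ hμ1 n) hμ1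

lemma tsum_prod_mul {α β : Type*} (F : α → ℝ) (K : β → ℝ)
    (hF : (Function.support F).Finite) (hK : (Function.support K).Finite) :
    ∑' p : α × β, F p.1 * K p.2 = (∑' a, F a) * (∑' b, K b) := by
  classical
  rw [tsum_eq_sum (s := hF.toFinset ×ˢ hK.toFinset) (by
    intro p hp
    simp only [Finset.mem_product, Set.Finite.mem_toFinset, Function.mem_support,
      not_and_or, not_not] at hp
    rcases hp with h | h <;> simp [h])]
  rw [tsum_eq_sum (s := hF.toFinset) (by intro a ha; simpa [Set.Finite.mem_toFinset] using ha),
    tsum_eq_sum (s := hK.toFinset) (by intro b hb; simpa [Set.Finite.mem_toFinset] using hb)]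
  rw [Finset.sum_product, Finset.sum_mul_sum]

lemma convPow_prod (μ' : G' → ℝ) (μ'' : G'' → ℝ)
    (hfin' : ∀ n, (Function.support (convPow μ' n)).Finite)
    (hfin'' : ∀ n, (Function.support (convPow μ'' n)).Finite) :
    ∀ n (g : G' × G''), convPow (fun p : G' × G'' => μ' p.1 * μ'' p.2) n g
      = convPow μ' n g.1 * convPow μ'' n g.2
  | 0, g => by
    simp only [convPow]
    have hiff : (g = 1) ↔ (g.1 = 1 ∧ g.2 = 1) := by
      constructor
      · rintro rfl; exact ⟨rfl, rfl⟩
      · rintro ⟨ha, hb⟩; exact Prod.ext ha hb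
    split_ifs with hg ha hb hb <;> simp_all
  | n + 1, g => by
    show conv (convPow (fun p : G' × G'' => μ' p.1 * μ'' p.2) n) _ g = _
    unfold conv
    have hrw : ∀ p : G' × G'',
        convPow (fun p : G' × G'' => μ' p.1 * μ'' p.2) n p *
          ((fun p : G' × G'' => μ' p.1 * μ'' p.2) (p⁻¹ * g))
        = (convPow μ' n p.1 * μ' (p.1⁻¹ * g.1)) * (convPow μ'' n p.2 * μ'' (p.2⁻¹ * g.2)) := by
      intro p
      rw [convPow_prod μ' μ'' hfin' hfin'' n p]
      simp only [Prod.fst_inv, Prod.snd_inv, Prod.fst_mul, Prod.snd_mul]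
      ring
    have hF : (Function.support (fun a => convPow μ' n a * μ' (a⁻¹ * g.1))).Finite := by
      apply (hfin' n).subset
      intro a ha
      simp only [Function.mem_support] at ha ⊢
      intro hz; exact ha (by simp [hz])
    have hK : (Function.support (fun b => convPow μ'' n b * μ'' (b⁻¹ * g.2))).Finite := by
      apply (hfin'' n).subset
      intro b hb
      simp only [Function.mem_support] at hb ⊢
      intro hz; exact hb (by simp [hz])
    calc ∑' (p : G' × G''), convPow (fun p : G' × G'' => μ' p.1 * μ'' p.2) n p *
            ((fun p : G' × G'' => μ' p.1 * μ'' p.2) (p⁻¹ * g))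
        = ∑' (p : G' × G''), (convPow μ' n p.1 * μ' (p.1⁻¹ * g.1)) *
            (convPow μ'' n p.2 * μ'' (p.2⁻¹ * g.2)) := tsum_congr hrw
      _ = (∑' a, convPow μ' n a * μ' (a⁻¹ * g.1)) * (∑' b, convPow μ'' n b * μ'' (b⁻¹ * g.2)) :=
          tsum_prod_mul (fun a => convPow μ' n a * μ' (a⁻¹ * g.1))
            (fun b => convPow μ'' n b * μ'' (b⁻¹ * g.2)) hF hK
      _ = _ := rfl

omit [Group G'] [Group G''] in
lemma entropy_prod (ρ' : G' → ℝ) (ρ'' : G'' → ℝ)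
    (h1 : (Function.support ρ').Finite) (h2 : (Function.support ρ'').Finite)
    (t1 : ∑' g, ρ' g = 1) (t2 : ∑' g, ρ'' g = 1) :
    entropy (fun p : G' × G'' => ρ' p.1 * ρ'' p.2) = entropy ρ' + entropy ρ'' := by
  classical
  set A := h1.toFinset
  set B := h2.toFinset
  have hsumA : ∑ a ∈ A, ρ' a = 1 := by
    rw [← t1]; symm
    exact tsum_eq_sum (by intro a ha; simpa [A, Set.Finite.mem_toFinset] using ha)
  have hsumB : ∑ b ∈ B, ρ'' b = 1 := by
    rw [← t2]; symm
    exact tsum_eq_sum (by intro b hb; simpa [B, Set.Finite.mem_toFinset] using hb)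
  have hentA : entropy ρ' = ∑ a ∈ A, Real.negMulLog (ρ' a) := by
    apply tsum_eq_sum
    intro a ha
    have : ρ' a = 0 := by simpa [A, Set.Finite.mem_toFinset] using ha
    simp [this]
  have hentB : entropy ρ'' = ∑ b ∈ B, Real.negMulLog (ρ'' b) := by
    apply tsum_eq_sum
    intro b hb
    have : ρ'' b = 0 := by simpa [B, Set.Finite.mem_toFinset] using hb
    simp [this]
  have key : entropy (fun p : G' × G'' => ρ' p.1 * ρ'' p.2)
      = ∑ p ∈ A ×ˢ B, Real.negMulLog (ρ' p.1 * ρ'' p.2) := by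
    apply tsum_eq_sum
    intro p hp
    simp only [Finset.mem_product, Set.Finite.mem_toFinset, Function.mem_support,
      not_and_or, not_not, A, B] at hp
    rcases hp with h | h <;> simp [h]
  rw [key]
  have hterm : ∀ p ∈ A ×ˢ B, Real.negMulLog (ρ' p.1 * ρ'' p.2)
      = ρ'' p.2 * Real.negMulLog (ρ' p.1) + ρ' p.1 * Real.negMulLog (ρ'' p.2) := fun p _ =>
    Real.negMulLog_mul _ _
  rw [Finset.sum_congr rfl hterm, Finset.sum_add_distrib,
    Finset.sum_product, Finset.sum_product]
  have e1 : ∑ a ∈ A, ∑ b ∈ B, ρ'' b * Real.negMulLog (ρ' a) = entropy ρ' := by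
    rw [hentA]
    apply Finset.sum_congr rfl
    intro a _
    rw [← Finset.sum_mul, hsumB, one_mul]
  have e2 : ∑ a ∈ A, ∑ b ∈ B, ρ' a * Real.negMulLog (ρ'' b) = entropy ρ'' := by
    have hin : ∀ a ∈ A, ∑ b ∈ B, ρ' a * Real.negMulLog (ρ'' b)
        = ρ' a * entropy ρ'' := by
      intro a _
      rw [← Finset.mul_sum, hentB]
    rw [Finset.sum_congr rfl hin, ← Finset.sum_mul, hsumA, one_mul]
  rw [e1, e2]

lemma exists_word (S : Set G) (hS : IsGenSet S) (g : G) :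
    ∃ l : List G, (∀ x ∈ l, x ∈ S) ∧ l.prod = g := by
  have hg : g ∈ Subgroup.closure S := by rw [hS.gen]; trivial
  induction hg using Subgroup.closure_induction with
  | mem x hx => exact ⟨[x], by simp [hx]⟩
  | one => exact ⟨[], by simp⟩
  | mul x y _ _ hx hy =>
      obtain ⟨l1, hm1, p1⟩ := hx; obtain ⟨l2, hm2, p2⟩ := hy
      refine ⟨l1 ++ l2, ?_, by simp [p1, p2]⟩
      intro z hz
      rcases List.mem_append.mp hz with hh | hh
      exacts [hm1 z hh, hm2 z hh]
  | inv x _ hx =>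
      obtain ⟨l, hl, pl⟩ := hx
      refine ⟨(l.map Inv.inv).reverse, ?_, ?_⟩
      · intro z hz
        simp only [List.mem_reverse, List.mem_map] at hz
        obtain ⟨w, hw, rfl⟩ := hz
        exact hS.symm w (hl w hw)
      · rw [List.prod_reverse_noncomm]
        simp [pl]

lemma wordLength_set_nonempty (S : Set G) (hS : IsGenSet S) (g : G) :
    {n | ∃ l : List G, l.length = n ∧ (∀ x ∈ l, x ∈ S) ∧ l.prod = g}.Nonempty := by
  obtain ⟨l, hl, hp⟩ := exists_word S hS g
  exact ⟨l.length, l, rfl, hl, hp⟩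

lemma exists_word_length (S : Set G) (hS : IsGenSet S) (g : G) :
    ∃ l : List G, l.length = wordLength S g ∧ (∀ x ∈ l, x ∈ S) ∧ l.prod = g :=
  Nat.sInf_mem (wordLength_set_nonempty S hS g)

omit [Group G] in
lemma prod_zip (a : List G') : ∀ (b : List G''), a.length = b.length →
    (a.zip b).prod = (a.prod, b.prod) := by
  induction a with
  | nil =>
    intro b hb
    have : b = [] := List.length_eq_zero_iff.mp hb.symm
    subst this; rfl
  | cons x xs ih =>
    intro b hb
    cases b with
    | nil => simp at hb
    | cons y ys =>
      simp only [List.zip_cons_cons, List.prod_cons, Prod.mk_mul_mk]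
      rw [ih ys (by simpa using hb)]
      rfl

omit [Group G] in
/-- A word for `(g.1, g.2)` of length `max |g.1| |g.2|`, built by padding with `1`. -/
lemma exists_word_prod (S' : Set G') (S'' : Set G'') (hS' : IsGenSet S') (hS'' : IsGenSet S'')
    (hone' : (1 : G') ∈ S') (hone'' : (1 : G'') ∈ S'') (g : G' × G'') :
    ∃ l : List (G' × G''), l.length = max (wordLength S' g.1) (wordLength S'' g.2) ∧
      (∀ x ∈ l, x ∈ S' ×ˢ S'') ∧ l.prod = g := by
  obtain ⟨l1, hl1, hm1, hp1⟩ := exists_word_length S' hS' g.1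
  obtain ⟨l2, hl2, hm2, hp2⟩ := exists_word_length S'' hS'' g.2
  set N := max (wordLength S' g.1) (wordLength S'' g.2) with hN
  set a := l1 ++ List.replicate (N - l1.length) 1 with ha
  set b := l2 ++ List.replicate (N - l2.length) 1 with hb
  have hal : a.length = N := by
    simp only [ha, List.length_append, List.length_replicate]
    omega
  have hbl : b.length = N := by
    simp only [hb, List.length_append, List.length_replicate]
    omega
  have hap : a.prod = g.1 := by
    simp [ha, List.prod_append, List.prod_replicate, hp1]
  have hbp : b.prod = g.2 := by
    simp [hb, List.prod_append, List.prod_replicate, hp2]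
  refine ⟨a.zip b, ?_, ?_, ?_⟩
  · simp [List.length_zip, hal, hbl]
  · intro x hx
    obtain ⟨hx1, hx2⟩ := List.of_mem_zip (by rwa [← Prod.mk.eta (p := x)] at hx)
    constructor
    · rcases List.mem_append.mp hx1 with hh | hh
      · exact hm1 _ hh
      · rw [List.eq_of_mem_replicate hh]; exact hone'
    · rcases List.mem_append.mp hx2 with hh | hh
      · exact hm2 _ hh
      · rw [List.eq_of_mem_replicate hh]; exact hone''
  · rw [prod_zip a b (by rw [hal, hbl]), hap, hbp]

omit [Group G] in
lemma wordLength_prod_le (S' : Set G') (S'' : Set G'') (hS' : IsGenSet S') (hS'' : IsGenSet S'')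
    (hone' : (1 : G') ∈ S') (hone'' : (1 : G'') ∈ S'') (g : G' × G'') :
    wordLength (S' ×ˢ S'') g ≤ max (wordLength S' g.1) (wordLength S'' g.2) := by
  obtain ⟨l, hlen, hmem, hprod⟩ := exists_word_prod S' S'' hS' hS'' hone' hone'' g
  exact Nat.sInf_le ⟨l, hlen, hmem, hprod⟩

omit [Group G] in
lemma wordLength_fst_le (S' : Set G') (S'' : Set G'') (hS' : IsGenSet S') (hS'' : IsGenSet S'')
    (hone' : (1 : G') ∈ S') (hone'' : (1 : G'') ∈ S'') (g : G' × G'') :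
    wordLength S' g.1 ≤ wordLength (S' ×ˢ S'') g := by
  have hne : {n | ∃ l : List (G' × G''), l.length = n ∧
      (∀ x ∈ l, x ∈ S' ×ˢ S'') ∧ l.prod = g}.Nonempty := by
    obtain ⟨l, hlen, hmem, hprod⟩ := exists_word_prod S' S'' hS' hS'' hone' hone'' g
    exact ⟨l.length, l, rfl, hmem, hprod⟩
  obtain ⟨l, hlen, hmem, hprod⟩ := Nat.sInf_mem hne
  calc wordLength S' g.1 ≤ l.length := by
        apply Nat.sInf_le
        refine ⟨l.map Prod.fst, by simp, ?_, ?_⟩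
        · intro x hx
          simp only [List.mem_map] at hx
          obtain ⟨p, hp, rfl⟩ := hx
          exact (hmem p hp).1
        · have := List.prod_hom l (MonoidHom.fst G' G'')
          simpa [hprod] using this
    _ = wordLength (S' ×ˢ S'') g := hlen

omit [Group G] in
lemma wordLength_snd_le (S' : Set G') (S'' : Set G'') (hS' : IsGenSet S') (hS'' : IsGenSet S'')
    (hone' : (1 : G') ∈ S') (hone'' : (1 : G'') ∈ S'') (g : G' × G'') :
    wordLength S'' g.2 ≤ wordLength (S' ×ˢ S'') g := by
  have hne : {n | ∃ l : List (G' × G''), l.length = n ∧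
      (∀ x ∈ l, x ∈ S' ×ˢ S'') ∧ l.prod = g}.Nonempty := by
    obtain ⟨l, hlen, hmem, hprod⟩ := exists_word_prod S' S'' hS' hS'' hone' hone'' g
    exact ⟨l.length, l, rfl, hmem, hprod⟩
  obtain ⟨l, hlen, hmem, hprod⟩ := Nat.sInf_mem hne
  calc wordLength S'' g.2 ≤ l.length := by
        apply Nat.sInf_le
        refine ⟨l.map Prod.snd, by simp, ?_, ?_⟩
        · intro x hx
          simp only [List.mem_map] at hx
          obtain ⟨p, hp, rfl⟩ := hx
          exact (hmem p hp).2
        · have := List.prod_hom l (MonoidHom.snd G' G'')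
          simpa [hprod] using this
    _ = wordLength (S' ×ˢ S'') g := hlen

end PWAux

/-- Combining the two extreme walks: if `E|X_n'| ≍ f(n)`, `H(X_n') ≍ f(n)² log(n+1)/n`,
`E|X_n''| ≍ H(X_n'') ≍ h(n)`, and `h(n) ≼ f(n) ≼ √(n h(n)/log(n+1))`, then the product
walk `X_n = (X_n', X_n'')` on `G' × G''` (with word length from the generating set
`S' × S''`) satisfies `E|X_n| ≍ f(n)` and `H(X_n) ≍ h(n)`. -/
theorem product_walk_speed_entropy
    (G' G'' : Type*) [Group G'] [Group G'']
    (S' : Set G') (S'' : Set G'') (hS' : IsGenSet S') (hS'' : IsGenSet S'')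
    (hone' : (1 : G') ∈ S') (hone'' : (1 : G'') ∈ S'')
    (μ' : G' → ℝ) (μ'' : G'' → ℝ) (hμ' : IsStepDist μ') (hμ'' : IsStepDist μ'')
    (f h : ℝ → ℝ)
    (hfpos : ∀ x : ℝ, 1 ≤ x → 0 < f x) (hhpos : ∀ x : ℝ, 1 ≤ x → 0 < h x)
    (hrel : ∃ c : ℝ, 0 < c ∧ ∀ n : ℝ, 1 ≤ n →
      h n ≤ c * f n ∧ f n ≤ c * Real.sqrt (n * h n / Real.log (n + 1)))
    (hspeed' : ∃ c : ℝ, 0 < c ∧ ∀ n : ℕ, 1 ≤ n →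
      speed S' μ' n ≤ c * f n ∧ f n ≤ c * speed S' μ' n)
    (hent' : ∃ c : ℝ, 0 < c ∧ ∀ n : ℕ, 1 ≤ n →
      entropy (convPow μ' n) ≤ c * (f n ^ 2 * Real.log (n + 1) / n) ∧
        f n ^ 2 * Real.log (n + 1) / n ≤ c * entropy (convPow μ' n))
    (hspeed'' : ∃ c : ℝ, 0 < c ∧ ∀ n : ℕ, 1 ≤ n →
      speed S'' μ'' n ≤ c * h n ∧ h n ≤ c * speed S'' μ'' n)
    (hent'' : ∃ c : ℝ, 0 < c ∧ ∀ n : ℕ, 1 ≤ n →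
      entropy (convPow μ'' n) ≤ c * h n ∧ h n ≤ c * entropy (convPow μ'' n)) :
    (∃ c : ℝ, 0 < c ∧ ∀ n : ℕ, 1 ≤ n →
      speed (S' ×ˢ S'') (fun p : G' × G'' => μ' p.1 * μ'' p.2) n ≤ c * f n ∧
        f n ≤ c * speed (S' ×ˢ S'') (fun p : G' × G'' => μ' p.1 * μ'' p.2) n) ∧
    (∃ c : ℝ, 0 < c ∧ ∀ n : ℕ, 1 ≤ n →
      entropy (convPow (fun p : G' × G'' => μ' p.1 * μ'' p.2) n) ≤ c * h n ∧
        h n ≤ c * entropy (convPow (fun p : G' × G'' => μ' p.1 * μ'' p.2) n)) := by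
  classical
  obtain ⟨c₀, hc₀, hrel⟩ := hrel
  obtain ⟨c₁, hc₁, hsp1⟩ := hspeed'
  obtain ⟨c₂, hc₂, hen1⟩ := hent'
  obtain ⟨c₃, hc₃, hsp2⟩ := hspeed''
  obtain ⟨c₄, hc₄, hen2⟩ := hent''
  set μp : G' × G'' → ℝ := fun p => μ' p.1 * μ'' p.2 with hμp
  have hfin' := PWAux.convPow_support_finite μ' hμ'.finSupp
  have hfin'' := PWAux.convPow_support_finite μ'' hμ''.finSupp
  have htot' := PWAux.convPow_total μ' hμ'.finSupp hμ'.total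
  have htot'' := PWAux.convPow_total μ'' hμ''.finSupp hμ''.total
  have hnn' := PWAux.convPow_nonneg μ' hμ'.nonneg
  have hnn'' := PWAux.convPow_nonneg μ'' hμ''.nonneg
  have hprodPow : ∀ n (g : G' × G''), convPow μp n g = convPow μ' n g.1 * convPow μ'' n g.2 :=
    PWAux.convPow_prod μ' μ'' hfin' hfin''
  -- speed bounds
  have hspeed_bounds : ∀ n : ℕ,
      speed S' μ' n ≤ speed (S' ×ˢ S'') μp n ∧
      speed (S' ×ˢ S'') μp n ≤ speed S' μ' n + speed S'' μ'' n := by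
    intro n
    set A := (hfin' n).toFinset with hA
    set B := (hfin'' n).toFinset with hB
    have hsumA : ∑ a ∈ A, convPow μ' n a = 1 := by
      rw [← htot' n]; symm
      exact tsum_eq_sum (by intro a ha; simpa [hA, Set.Finite.mem_toFinset] using ha)
    have hsumB : ∑ b ∈ B, convPow μ'' n b = 1 := by
      rw [← htot'' n]; symm
      exact tsum_eq_sum (by intro b hb; simpa [hB, Set.Finite.mem_toFinset] using hb)
    have hsp' : speed S' μ' n = ∑ a ∈ A, convPow μ' n a * (wordLength S' a : ℝ) := by
      apply tsum_eq_sum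
      intro a ha
      have : convPow μ' n a = 0 := by simpa [hA, Set.Finite.mem_toFinset] using ha
      simp [this]
    have hsp'' : speed S'' μ'' n = ∑ b ∈ B, convPow μ'' n b * (wordLength S'' b : ℝ) := by
      apply tsum_eq_sum
      intro b hb
      have : convPow μ'' n b = 0 := by simpa [hB, Set.Finite.mem_toFinset] using hb
      simp [this]
    have hspp : speed (S' ×ˢ S'') μp n = ∑ p ∈ A ×ˢ B,
        convPow μ' n p.1 * convPow μ'' n p.2 * (wordLength (S' ×ˢ S'') p : ℝ) := by
      unfold speed
      rw [tsum_congr (fun g => by rw [hprodPow n g])]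
      apply tsum_eq_sum
      intro p hp
      simp only [Finset.mem_product, hA, hB, Set.Finite.mem_toFinset, Function.mem_support,
        not_and_or, not_not] at hp
      rcases hp with hz | hz <;> simp [hz]
    have key1 : ∑ p ∈ A ×ˢ B, convPow μ' n p.1 * convPow μ'' n p.2 * (wordLength S' p.1 : ℝ)
        = speed S' μ' n := by
      rw [hsp', Finset.sum_product]
      apply Finset.sum_congr rfl
      intro a _
      have : ∀ b ∈ B, convPow μ' n a * convPow μ'' n b * (wordLength S' a : ℝ)
          = convPow μ'' n b * (convPow μ' n a * (wordLength S' a : ℝ)) := by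
        intro b _; ring
      rw [Finset.sum_congr rfl this, ← Finset.sum_mul, hsumB, one_mul]
    have key2 : ∑ p ∈ A ×ˢ B, convPow μ' n p.1 * convPow μ'' n p.2 * (wordLength S'' p.2 : ℝ)
        = speed S'' μ'' n := by
      rw [hsp'', Finset.sum_product]
      have inner : ∀ a ∈ A, ∑ b ∈ B, convPow μ' n a * convPow μ'' n b * (wordLength S'' b : ℝ)
          = convPow μ' n a * ∑ b ∈ B, convPow μ'' n b * (wordLength S'' b : ℝ) := by
        intro a _
        rw [Finset.mul_sum]
        apply Finset.sum_congr rfl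
        intro b _; ring
      rw [Finset.sum_congr rfl inner, ← Finset.sum_mul, hsumA, one_mul]
    constructor
    · rw [hspp, ← key1]
      apply Finset.sum_le_sum
      intro p _
      apply mul_le_mul_of_nonneg_left
      · exact_mod_cast PWAux.wordLength_fst_le S' S'' hS' hS'' hone' hone'' p
      · exact mul_nonneg (hnn' n p.1) (hnn'' n p.2)
    · rw [hspp, ← key1, ← key2, ← Finset.sum_add_distrib]
      apply Finset.sum_le_sum
      intro p _
      rw [← mul_add]
      apply mul_le_mul_of_nonneg_left
      · have h1 : wordLength (S' ×ˢ S'') p ≤ max (wordLength S' p.1) (wordLength S'' p.2) :=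
          PWAux.wordLength_prod_le S' S'' hS' hS'' hone' hone'' p
        have h2 : max (wordLength S' p.1) (wordLength S'' p.2)
            ≤ wordLength S' p.1 + wordLength S'' p.2 := by omega
        have := le_trans h1 h2
        push_cast
        exact_mod_cast this
      · exact mul_nonneg (hnn' n p.1) (hnn'' n p.2)
  -- entropy equality
  have hent_eq : ∀ n, entropy (convPow μp n)
      = entropy (convPow μ' n) + entropy (convPow μ'' n) := by
    intro n
    have heq : convPow μp n = fun p : G' × G'' => convPow μ' n p.1 * convPow μ'' n p.2 :=
      funext (hprodPow n)
    rw [heq]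
    exact PWAux.entropy_prod _ _ (hfin' n) (hfin'' n) (htot' n) (htot'' n)
  -- the f² log / n ≤ c₀² h bound
  have hflog : ∀ n : ℕ, 1 ≤ n →
      f n ^ 2 * Real.log (n + 1) / n ≤ c₀ ^ 2 * h n := by
    intro n hn
    have hn1 : (1:ℝ) ≤ (n:ℝ) := by exact_mod_cast hn
    have hnpos : (0:ℝ) < n := by linarith
    have hlogpos : (0:ℝ) < Real.log ((n:ℝ) + 1) := Real.log_pos (by linarith)
    have hhp : 0 < h n := hhpos _ hn1
    have hX : (0:ℝ) ≤ (n:ℝ) * h n / Real.log ((n:ℝ) + 1) := by positivity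
    have h2 := (hrel _ hn1).2
    have hf2 : f (n:ℝ) ^ 2 ≤ c₀ ^ 2 * ((n:ℝ) * h n / Real.log ((n:ℝ) + 1)) := by
      have hsq := pow_le_pow_left₀ (le_of_lt (hfpos _ hn1)) h2 2
      rwa [mul_pow, Real.sq_sqrt hX] at hsq
    have hstep : f (n:ℝ) ^ 2 * Real.log ((n:ℝ) + 1) / n
        ≤ c₀ ^ 2 * ((n:ℝ) * h n / Real.log ((n:ℝ) + 1)) * Real.log ((n:ℝ) + 1) / n := by
      gcongr
    calc f (n:ℝ) ^ 2 * Real.log ((n:ℝ) + 1) / n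
        ≤ c₀ ^ 2 * ((n:ℝ) * h n / Real.log ((n:ℝ) + 1)) * Real.log ((n:ℝ) + 1) / n := hstep
      _ = c₀ ^ 2 * h n := by
          field_simp
  constructor
  · -- speed
    refine ⟨c₁ + c₃ * c₀, by positivity, ?_⟩
    intro n hn
    have hn1 : (1:ℝ) ≤ (n:ℝ) := by exact_mod_cast hn
    have hb := hspeed_bounds n
    obtain ⟨h1u, h1l⟩ := hsp1 n hn
    obtain ⟨h3u, h3l⟩ := hsp2 n hn
    have hhf := (hrel _ hn1).1
    have hfp := hfpos _ hn1
    have hsp_pos : 0 < speed S' μ' n := by nlinarith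
    have hsp_prod_nonneg : (0:ℝ) ≤ speed (S' ×ˢ S'') μp n := le_trans hsp_pos.le hb.1
    constructor
    · calc speed (S' ×ˢ S'') μp n ≤ speed S' μ' n + speed S'' μ'' n := hb.2
        _ ≤ c₁ * f n + c₃ * (c₀ * f n) := by
            have hle : speed S'' μ'' n ≤ c₃ * (c₀ * f n) := by
              calc speed S'' μ'' n ≤ c₃ * h n := h3u
                _ ≤ c₃ * (c₀ * f n) := mul_le_mul_of_nonneg_left hhf hc₃.le
            exact add_le_add h1u hle
        _ = (c₁ + c₃ * c₀) * f n := by ring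
    · calc f (n:ℝ) ≤ c₁ * speed S' μ' n := h1l
        _ ≤ c₁ * speed (S' ×ˢ S'') μp n := mul_le_mul_of_nonneg_left hb.1 hc₁.le
        _ ≤ (c₁ + c₃ * c₀) * speed (S' ×ˢ S'') μp n := by
            nlinarith [mul_nonneg (mul_pos hc₃ hc₀).le hsp_prod_nonneg]
  · -- entropy
    refine ⟨c₂ * c₀ ^ 2 + c₄, by positivity, ?_⟩
    intro n hn
    have hn1 : (1:ℝ) ≤ (n:ℝ) := by exact_mod_cast hn
    have hhp := hhpos _ hn1
    obtain ⟨h2u, h2l⟩ := hen1 n hn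
    obtain ⟨h4u, h4l⟩ := hen2 n hn
    have hEq := hent_eq n
    have hfl := hflog n hn
    have hfpos' := hfpos _ hn1
    have hnpos : (0:ℝ) < n := by linarith
    have hlogpos : (0:ℝ) < Real.log ((n:ℝ) + 1) := Real.log_pos (by linarith)
    have hq_pos : (0:ℝ) < f n ^ 2 * Real.log ((n:ℝ) + 1) / n := by positivity
    have hH1_pos : 0 < entropy (convPow μ' n) := by nlinarith
    have hH2_pos : 0 < entropy (convPow μ'' n) := by nlinarith
    rw [hEq]
    constructor
    · calc entropy (convPow μ' n) + entropy (convPow μ'' n)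
          ≤ c₂ * (f n ^ 2 * Real.log ((n:ℝ) + 1) / n) + c₄ * h n := add_le_add h2u h4u
        _ ≤ c₂ * (c₀ ^ 2 * h n) + c₄ * h n := by
            have := mul_le_mul_of_nonneg_left hfl hc₂.le
            linarith
        _ = (c₂ * c₀ ^ 2 + c₄) * h n := by ring
    · calc h (n:ℝ) ≤ c₄ * entropy (convPow μ'' n) := h4l
        _ ≤ c₄ * (entropy (convPow μ' n) + entropy (convPow μ'' n)) := by nlinarith
        _ ≤ (c₂ * c₀ ^ 2 + c₄) * (entropy (convPow μ' n) + entropy (convPow μ'' n)) := by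
            nlinarith [mul_nonneg (mul_pos hc₂ (pow_pos hc₀ 2)).le (add_pos hH1_pos hH2_pos).le]
end
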